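/- arXiv:1312.2931 — 7 statements merged into one kernel-verified Lean document; each statement's English description precedes it below -/
import Mathlib

section
/- Let u, f be bounded uniformly continuous real-valued functions on ℝ and let 0 < α < β. If u(t) = f(t) + α ∫₀^∞ e^{-βτ} u(t-τ) dτ for all t ∈ ℝ, then u(t) = f(t) + α ∫₀^∞ e^{-(β-α)τ} f(t-τ) dτ for all t ∈ ℝ. -/
open MeasureTheory Real Set Filter Topology

private lemma shift_Ioi (g : ℝ → ℝ) (τ : ℝ) :
    ∫ σ in Ioi (0:ℝ), g (σ + τ) = ∫ s in Ioi τ, g s := by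
  have := (measurePreserving_add_right volume τ).setIntegral_preimage_emb
      (measurableEmbedding_addRight τ) g (Ioi τ)
  simpa using this

private lemma tendsto_exp_neg_mul {b : ℝ} (hb : 0 < b) :
    Tendsto (fun s : ℝ => Real.exp (-b * s)) atTop (𝓝 0) := by
  have h1 : Tendsto (fun s : ℝ => b * s) atTop atTop :=
    Tendsto.const_mul_atTop hb tendsto_id
  refine (tendsto_exp_neg_atTop_nhds_zero.comp h1).congr fun s => ?_
  simp [Function.comp, neg_mul]

private lemma int_exp_Ioi {b : ℝ} (hb : 0 < b) (a : ℝ) :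
    ∫ s in Ioi a, Real.exp (-b * s) = Real.exp (-b * a) / b := by
  have hd : ∀ x ∈ Ici a, HasDerivAt (fun s => -Real.exp (-b * s) / b)
      (Real.exp (-b * x)) x := by
    intro x _
    have h1 : HasDerivAt (fun s : ℝ => -b * s) (-b) x := by
      simpa using (hasDerivAt_id x).const_mul (-b)
    have := (h1.exp.neg).div_const b
    refine this.congr_deriv ?_
    field_simp
  have ht : Tendsto (fun s : ℝ => -Real.exp (-b * s) / b) atTop (𝓝 0) := by
    have := ((tendsto_exp_neg_mul hb).neg).div_const b
    simpa using this
  have := integral_Ioi_of_hasDerivAt_of_tendsto' hd (exp_neg_integrableOn_Ioi a hb) ht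
  rw [this]; ring

private lemma int_ker {b C : ℝ} (hb : 0 < b) {g : ℝ → ℝ} (a : ℝ) (hg : Measurable g)
    (hC : ∀ s ∈ Ioi a, |g s| ≤ C) :
    IntegrableOn (fun s => Real.exp (-b * s) * g s) (Ioi a) := by
  have hdom : IntegrableOn (fun s => C * Real.exp (-b * s)) (Ioi a) :=
    (exp_neg_integrableOn_Ioi a hb).const_mul C
  refine hdom.mono' ?_ ?_
  · exact ((Real.measurable_exp.comp (measurable_id.const_mul (-b))).mul hg).aestronglyMeasurable
  · filter_upwards [ae_restrict_mem measurableSet_Ioi] with x hx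
    have h0 : (0:ℝ) < Real.exp (-b * x) := Real.exp_pos _
    have habs : |Real.exp (-b * x) * g x| = Real.exp (-b * x) * |g x| := by
      rw [abs_mul, abs_of_pos h0]
    rw [Real.norm_eq_abs, habs]
    calc Real.exp (-b * x) * |g x| ≤ Real.exp (-b * x) * C :=
          mul_le_mul_of_nonneg_left (hC x hx) h0.le
      _ = C * Real.exp (-b * x) := mul_comm _ _

private lemma split_Ioi {k : ℝ → ℝ} (hk : ∀ x : ℝ, IntegrableOn k (Ioi x)) (a b : ℝ) :
    (∫ s in Ioi a, k s) = (∫ s in a..b, k s) + ∫ s in Ioi b, k s := by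
  rcases le_total a b with hab | hba
  · rw [intervalIntegral.integral_of_le hab, ← Ioc_union_Ioi_eq_Ioi hab,
      setIntegral_union (Ioc_disjoint_Ioi le_rfl) measurableSet_Ioi
        ((hk a).mono_set Ioc_subset_Ioi_self) (hk b)]
  · rw [intervalIntegral.integral_symm, intervalIntegral.integral_of_le hba,
      ← Ioc_union_Ioi_eq_Ioi hba,
      setIntegral_union (Ioc_disjoint_Ioi le_rfl) measurableSet_Ioi
        ((hk b).mono_set Ioc_subset_Ioi_self) (hk a)]
    ring
theorem stmt_0 (u f : ℝ → ℝ) (α β : ℝ) (hα : 0 < α) (hαβ : α < β)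
    (hu_bd : ∃ C, ∀ t, |u t| ≤ C) (hf_bd : ∃ C, ∀ t, |f t| ≤ C)
    (hu_uc : UniformContinuous u) (hf_uc : UniformContinuous f)
    (h : ∀ t : ℝ, u t = f t + α * ∫ τ in Set.Ioi (0:ℝ), Real.exp (-β * τ) * u (t - τ)) :
    ∀ t : ℝ, u t = f t + α * ∫ τ in Set.Ioi (0:ℝ), Real.exp (-(β - α) * τ) * f (t - τ) := by
  obtain ⟨Cf, hCf⟩ := hf_bd
  obtain ⟨Cu, hCu⟩ := hu_bd
  have hβ : (0:ℝ) < β := hα.trans hαβ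
  have hγ : (0:ℝ) < β - α := sub_pos.2 hαβ
  have hfm : Measurable f := hf_uc.continuous.measurable
  have hum : Measurable u := hu_uc.continuous.measurable
  have hfc : Continuous f := hf_uc.continuous
  have hCf0 : 0 ≤ Cf := (abs_nonneg _).trans (hCf 0)
  set w : ℝ → ℝ := fun s => ∫ σ in Ioi (0:ℝ), Real.exp (-(β - α) * σ) * f (s - σ) with hw
  -- boundedness of w
  have hwbd : ∀ s, |w s| ≤ Cf / (β - α) := by
    intro s
    have h1 : ‖w s‖ ≤ ∫ σ in Ioi (0:ℝ), Cf * Real.exp (-(β - α) * σ) := by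
      apply norm_integral_le_of_norm_le ((exp_neg_integrableOn_Ioi 0 hγ).const_mul Cf)
      filter_upwards with x
      rw [Real.norm_eq_abs, abs_mul, abs_of_pos (Real.exp_pos _), mul_comm]
      exact mul_le_mul_of_nonneg_right (hCf _) (Real.exp_pos _).le
    rw [integral_const_mul, int_exp_Ioi hγ 0, mul_zero, Real.exp_zero,
      mul_one_div] at h1
    exact h1
  -- the key identity
  have main : ∀ t : ℝ, IntegrableOn (fun τ => Real.exp (-β * τ) * w (t - τ)) (Ioi 0) ∧
      α * (∫ τ in Ioi (0:ℝ), Real.exp (-β * τ) * w (t - τ)) =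
        w t - ∫ τ in Ioi (0:ℝ), Real.exp (-β * τ) * f (t - τ) := by
    intro t
    set k : ℝ → ℝ := fun s => Real.exp (-(β - α) * s) * f (t - s) with hkdef
    have hkint : ∀ x : ℝ, IntegrableOn k (Ioi x) := by
      intro x
      exact int_ker hγ x (hfm.comp (measurable_const.sub measurable_id))
        (fun s _ => hCf _)
    have hkc : Continuous k :=
      (Real.continuous_exp.comp (continuous_const.mul continuous_id)).mul
        (hfc.comp (continuous_const.sub continuous_id))
    set G : ℝ → ℝ := fun τ => ∫ s in Ioi τ, k s with hGdef
    have hw0 : (∫ s in Ioi (0:ℝ), k s) = w t := rfl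
    have hGsplit : ∀ τ, G τ = w t - ∫ s in (0:ℝ)..τ, k s := by
      intro τ
      have h0 := split_Ioi hkint 0 τ
      rw [hw0] at h0
      simp only [hGdef]
      linarith
    have hGderiv : ∀ τ, HasDerivAt G (-(k τ)) τ := by
      intro τ
      have hH : HasDerivAt (fun x => ∫ s in (0:ℝ)..x, k s) (k τ) τ :=
        intervalIntegral.integral_hasDerivAt_right (hkc.intervalIntegrable _ _)
          (hkc.stronglyMeasurable.stronglyMeasurableAtFilter) hkc.continuousAt
      have h2 := hH.const_sub (w t)
      have hfun : G = fun x => w t - ∫ s in (0:ℝ)..x, k s := funext hGsplit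
      rw [hfun]
      exact h2
    have hGcont : Continuous G :=
      continuous_iff_continuousAt.2 fun τ => (hGderiv τ).continuousAt
    have hGbd : ∀ τ, |G τ| ≤ Cf / (β - α) * Real.exp (-(β - α) * τ) := by
      intro τ
      have h1 : ‖G τ‖ ≤ ∫ s in Ioi τ, Cf * Real.exp (-(β - α) * s) := by
        apply norm_integral_le_of_norm_le ((exp_neg_integrableOn_Ioi τ hγ).const_mul Cf)
        filter_upwards with x
        rw [Real.norm_eq_abs, abs_mul, abs_of_pos (Real.exp_pos _), mul_comm]
        exact mul_le_mul_of_nonneg_right (hCf _) (Real.exp_pos _).le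
      rw [integral_const_mul, int_exp_Ioi hγ τ] at h1
      calc |G τ| ≤ Cf * (Real.exp (-(β - α) * τ) / (β - α)) := h1
        _ = Cf / (β - α) * Real.exp (-(β - α) * τ) := by ring
    have hGbd' : ∀ τ ∈ Ioi (0:ℝ), |G τ| ≤ Cf / (β - α) := by
      intro τ hτ
      refine (hGbd τ).trans ?_
      have he : Real.exp (-(β - α) * τ) ≤ 1 := by
        apply Real.exp_le_one_iff.2
        have : (0:ℝ) < τ := hτ
        nlinarith
      calc Cf / (β - α) * Real.exp (-(β - α) * τ) ≤ Cf / (β - α) * 1 :=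
            mul_le_mul_of_nonneg_left he (by positivity)
        _ = Cf / (β - α) := mul_one _
    have hint1 : IntegrableOn (fun τ => Real.exp (-α * τ) * G τ) (Ioi 0) :=
      int_ker hα 0 hGcont.measurable hGbd'
    have hint2 : IntegrableOn (fun τ => Real.exp (-β * τ) * (f (t - τ) / α)) (Ioi 0) := by
      refine int_ker (C := Cf / α) hβ 0
        ((hfm.comp (measurable_const.sub measurable_id)).div_const α) (fun s _ => ?_)
      rw [abs_div, abs_of_pos hα]
      gcongr
      exact hCf _
    set Φ : ℝ → ℝ := fun τ => -(Real.exp (-α * τ) * G τ) / α with hΦdef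
    have hΦd : ∀ x ∈ Ici (0:ℝ), HasDerivAt Φ
        (Real.exp (-α * x) * G x + Real.exp (-β * x) * (f (t - x) / α)) x := by
      intro x _
      have h1 : HasDerivAt (fun s : ℝ => -α * s) (-α) x := by
        simpa using (hasDerivAt_id x).const_mul (-α)
      have he : HasDerivAt (fun τ => Real.exp (-α * τ)) (Real.exp (-α * x) * -α) x := h1.exp
      have h2 := ((he.mul (hGderiv x)).neg).div_const α
      have hexp : Real.exp (-α * x) * Real.exp (-(β - α) * x) = Real.exp (-β * x) := by
        rw [← Real.exp_add]; ring_nf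
      refine h2.congr_deriv ?_
      rw [← hexp]
      simp only [hkdef]
      field_simp
      ring
    have hΦtend : Tendsto Φ atTop (𝓝 0) := by
      apply squeeze_zero_norm' (a := fun x => Real.exp (-α * x) * (Cf / (β - α) / α))
      · filter_upwards [eventually_ge_atTop (0:ℝ)] with x hx
        have hGx : |G x| ≤ Cf / (β - α) := by
          rcases eq_or_lt_of_le hx with hx0 | hx0
          · refine (hGbd x).trans ?_
            rw [← hx0]
            simp
          · exact hGbd' x hx0
        rw [hΦdef]
        simp only []
        rw [Real.norm_eq_abs, abs_div, abs_of_pos hα, abs_neg, abs_mul,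
          abs_of_pos (Real.exp_pos _)]
        rw [div_eq_mul_inv, div_eq_mul_inv, mul_assoc]
        refine mul_le_mul_of_nonneg_left ?_ (Real.exp_pos _).le
        exact mul_le_mul_of_nonneg_right hGx (by positivity)
      · have := (tendsto_exp_neg_mul hα).mul_const (Cf / (β - α) / α)
        simpa using this
    have hFTC := integral_Ioi_of_hasDerivAt_of_tendsto' hΦd (hint1.add hint2) hΦtend
    have hΦ0 : Φ 0 = -(w t) / α := by
      have h1 : Φ 0 = -(Real.exp (-α * 0) * G 0) / α := rfl
      have h2 : G 0 = w t := hw0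
      rw [h1, h2, mul_zero, Real.exp_zero, one_mul]
    rw [hΦ0, integral_add hint1 hint2] at hFTC
    have hsplit2 : (∫ τ in Ioi (0:ℝ), Real.exp (-β * τ) * (f (t - τ) / α)) =
        (∫ τ in Ioi (0:ℝ), Real.exp (-β * τ) * f (t - τ)) / α := by
      rw [← integral_div]
      congr 1
      funext τ
      ring
    rw [hsplit2] at hFTC
    -- hFTC : ∫ exp(-ατ) G + (∫ exp(-βτ) f(t-τ))/α = 0 - (-(w t)/α)
    have hA : (∫ τ in Ioi (0:ℝ), Real.exp (-α * τ) * G τ) =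
        w t / α - (∫ τ in Ioi (0:ℝ), Real.exp (-β * τ) * f (t - τ)) / α := by
      rw [eq_sub_iff_add_eq]
      rw [hFTC]
      ring
    -- pointwise identity  exp(-βτ) w(t-τ) = exp(-ατ) G τ
    have hwG : ∀ τ : ℝ, Real.exp (-β * τ) * w (t - τ) = Real.exp (-α * τ) * G τ := by
      intro τ
      have hshift := shift_Ioi (fun s => Real.exp ((β - α) * τ) * k s) τ
      have hlhs : (∫ σ in Ioi (0:ℝ),
          (fun s => Real.exp ((β - α) * τ) * k s) (σ + τ)) = w (t - τ) := by
        refine congrArg _ (funext fun σ => ?_)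
        simp only [hkdef]
        have harg : t - (σ + τ) = t - τ - σ := by ring
        rw [harg, ← mul_assoc, ← Real.exp_add]
        congr 2
        ring
      have hrhs : (∫ s in Ioi τ, Real.exp ((β - α) * τ) * k s) =
          Real.exp ((β - α) * τ) * G τ := integral_const_mul _ _
      have hwg : w (t - τ) = Real.exp ((β - α) * τ) * G τ := by
        rw [← hlhs, hshift, hrhs]
      rw [hwg, ← mul_assoc, ← Real.exp_add]
      congr 2
      ring
    have hptw : ∀ τ : ℝ, Real.exp (-α * τ) * G τ = Real.exp (-β * τ) * w (t - τ) :=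
      fun τ => (hwG τ).symm
    have hint3 : IntegrableOn (fun τ => Real.exp (-β * τ) * w (t - τ)) (Ioi 0) :=
      hint1.congr_fun (fun τ _ => hptw τ) measurableSet_Ioi
    refine ⟨hint3, ?_⟩
    have hieq : (∫ τ in Ioi (0:ℝ), Real.exp (-β * τ) * w (t - τ)) =
        ∫ τ in Ioi (0:ℝ), Real.exp (-α * τ) * G τ :=
      congrArg _ (funext fun τ => hwG τ)
    rw [hieq, hA, mul_sub, mul_div_cancel₀ _ (ne_of_gt hα), mul_div_cancel₀ _ (ne_of_gt hα)]
  -- g := f + α w satisfies the same integral equation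
  have hgint : ∀ s : ℝ, IntegrableOn
      (fun τ => Real.exp (-β * τ) * (f (s - τ) + α * w (s - τ))) (Ioi 0) := by
    intro s
    have h1 : IntegrableOn (fun τ => Real.exp (-β * τ) * f (s - τ)) (Ioi 0) :=
      int_ker hβ 0 (hfm.comp (measurable_const.sub measurable_id)) (fun x _ => hCf _)
    have h2 := ((main s).1).const_mul α
    have h12 : IntegrableOn (fun τ => Real.exp (-β * τ) * f (s - τ)
        + α * (Real.exp (-β * τ) * w (s - τ))) (Ioi 0) := h1.add h2
    exact h12.congr_fun (fun τ _ => by ring) measurableSet_Ioi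
  have hg : ∀ s : ℝ, f s + α * w s = f s + α * ∫ τ in Ioi (0:ℝ),
      Real.exp (-β * τ) * (f (s - τ) + α * w (s - τ)) := by
    intro s
    have h1 : IntegrableOn (fun τ => Real.exp (-β * τ) * f (s - τ)) (Ioi 0) :=
      int_ker hβ 0 (hfm.comp (measurable_const.sub measurable_id)) (fun x _ => hCf _)
    have h2 := ((main s).1).const_mul α
    have hsum : (∫ τ in Ioi (0:ℝ), Real.exp (-β * τ) * (f (s - τ) + α * w (s - τ)))
        = (∫ τ in Ioi (0:ℝ), Real.exp (-β * τ) * f (s - τ))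
          + ∫ τ in Ioi (0:ℝ), α * (Real.exp (-β * τ) * w (s - τ)) := by
      rw [← integral_add h1 h2]
      exact congrArg _ (funext fun τ => by ring)
    have hm := (main s).2
    rw [hsum, integral_const_mul, hm]
    ring
  -- contraction
  have hd_eq : ∀ s : ℝ, u s - (f s + α * w s) =
      α * ∫ τ in Ioi (0:ℝ), Real.exp (-β * τ) *
        (u (s - τ) - (f (s - τ) + α * w (s - τ))) := by
    intro s
    have h1 : IntegrableOn (fun τ => Real.exp (-β * τ) * u (s - τ)) (Ioi 0) :=
      int_ker hβ 0 (hum.comp (measurable_const.sub measurable_id)) (fun x _ => hCu _)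
    have h3 : (∫ τ in Ioi (0:ℝ), Real.exp (-β * τ) *
          (u (s - τ) - (f (s - τ) + α * w (s - τ))))
        = (∫ τ in Ioi (0:ℝ), Real.exp (-β * τ) * u (s - τ))
          - ∫ τ in Ioi (0:ℝ), Real.exp (-β * τ) * (f (s - τ) + α * w (s - τ)) := by
      rw [← integral_sub h1 (hgint s)]
      exact congrArg _ (funext fun τ => by ring)
    rw [h3, mul_sub]
    have hu' := h s
    have hg' := hg s
    linarith
  have hdbd : ∀ s, |u s - (f s + α * w s)| ≤ Cu + (Cf + α * (Cf / (β - α))) := by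
    intro s
    have h1 := abs_le.1 (hCu s)
    have h2 := abs_le.1 (hCf s)
    have h3 := abs_le.1 (hwbd s)
    have h4 : α * w s ≤ α * (Cf / (β - α)) := mul_le_mul_of_nonneg_left h3.2 hα.le
    have h5 : α * -(Cf / (β - α)) ≤ α * w s := mul_le_mul_of_nonneg_left h3.1 hα.le
    rw [abs_le]
    constructor <;> nlinarith [h1.1, h1.2, h2.1, h2.2, h4, h5]
  have hiter : ∀ n : ℕ, ∀ s : ℝ, |u s - (f s + α * w s)| ≤ (α / β) ^ n * (Cu + (Cf + α * (Cf / (β - α)))) := by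
    intro n
    induction n with
    | zero => intro s; simpa using hdbd s
    | succ n ih =>
      intro s
      rw [hd_eq s, abs_mul, abs_of_pos hα]
      have hb : ‖∫ τ in Ioi (0:ℝ), Real.exp (-β * τ) *
            (u (s - τ) - (f (s - τ) + α * w (s - τ)))‖
          ≤ ∫ τ in Ioi (0:ℝ), Real.exp (-β * τ) * ((α / β) ^ n * (Cu + (Cf + α * (Cf / (β - α))))) := by
        apply norm_integral_le_of_norm_le ((exp_neg_integrableOn_Ioi 0 hβ).mul_const _)
        filter_upwards with x
        rw [Real.norm_eq_abs, abs_mul, abs_of_pos (Real.exp_pos _)]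
        exact mul_le_mul_of_nonneg_left (ih _) (Real.exp_pos _).le
      have hval : (∫ τ in Ioi (0:ℝ), Real.exp (-β * τ) * ((α / β) ^ n * (Cu + (Cf + α * (Cf / (β - α))))))
          = (α / β) ^ n * (Cu + (Cf + α * (Cf / (β - α)))) / β := by
        rw [integral_mul_const, int_exp_Ioi hβ 0, mul_zero, Real.exp_zero]
        ring
      rw [hval] at hb
      have hb' : |∫ τ in Ioi (0:ℝ), Real.exp (-β * τ) *
            (u (s - τ) - (f (s - τ) + α * w (s - τ)))|
          ≤ (α / β) ^ n * (Cu + (Cf + α * (Cf / (β - α)))) / β := hb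
      calc α * |∫ τ in Ioi (0:ℝ), Real.exp (-β * τ) *
            (u (s - τ) - (f (s - τ) + α * w (s - τ)))|
          ≤ α * ((α / β) ^ n * (Cu + (Cf + α * (Cf / (β - α)))) / β) := mul_le_mul_of_nonneg_left hb' hα.le
        _ = (α / β) ^ (n + 1) * (Cu + (Cf + α * (Cf / (β - α)))) := by
            ring
  intro t
  have hlim : Tendsto (fun n : ℕ => (α / β) ^ n * (Cu + (Cf + α * (Cf / (β - α))))) atTop (𝓝 0) := by
    have h0 : |α / β| < 1 := by
      rw [abs_of_pos (div_pos hα hβ)]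
      exact (div_lt_one hβ).2 hαβ
    have := (tendsto_pow_atTop_nhds_zero_of_abs_lt_one h0).mul_const (Cu + (Cf + α * (Cf / (β - α))))
    simpa using this
  have h0 : |u t - (f t + α * w t)| ≤ 0 := ge_of_tendsto' hlim (fun n => hiter n t)
  have h1 : u t - (f t + α * w t) = 0 :=
    abs_eq_zero.1 (le_antisymm h0 (abs_nonneg _))
  linarith
end

section
/- Let u, f be bounded uniformly continuous real-valued functions on ℝ, let 0 < α < β, and suppose u(t) ≤ f(t) + α ∫₀^∞ e^{-βτ} u(t-τ) dτ for all t ∈ ℝ. Then u(t) ≤ f(t) + α ∫₀^∞ e^{-(β-α)τ} f(t-τ) dτ for all t ∈ ℝ. -/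
open MeasureTheory Real Set

lemma conv_integrable {v : ℝ → ℝ} {C c : ℝ} (hc : 0 < c)
    (hv : Measurable v) (hvb : ∀ s, |v s| ≤ C) (t : ℝ) :
    IntegrableOn (fun τ => Real.exp (-c * τ) * v (t - τ)) (Set.Ioi 0) := by
  have hCint : IntegrableOn (fun τ => C * Real.exp (-c * τ)) (Set.Ioi (0:ℝ)) :=
    (exp_neg_integrableOn_Ioi 0 hc).const_mul C
  refine Integrable.mono' hCint ?_ ?_
  · exact ((Real.measurable_exp.comp (measurable_const.mul measurable_id)).mul
      (hv.comp (measurable_const.sub measurable_id))).aestronglyMeasurable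
  · filter_upwards with τ
    rw [Real.norm_eq_abs, abs_mul, abs_of_pos (Real.exp_pos _)]
    calc Real.exp (-c*τ) * |v (t-τ)| ≤ Real.exp (-c*τ) * C :=
          mul_le_mul_of_nonneg_left (hvb _) (Real.exp_pos _).le
      _ = C * Real.exp (-c*τ) := mul_comm _ _

lemma integral_exp_neg_mul_Ioi' {c : ℝ} (hc : 0 < c) :
    ∫ τ in Set.Ioi (0:ℝ), Real.exp (-c * τ) = 1 / c := by
  have hderiv : ∀ x ∈ Set.Ici (0:ℝ),
      HasDerivAt (fun τ => -Real.exp (-c * τ) / c) (Real.exp (-c * x)) x := by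
    intro x _
    have h1 : HasDerivAt (fun τ : ℝ => -c * τ) (-c) x := by
      simpa using (hasDerivAt_id x).const_mul (-c)
    have h2 := (h1.exp).neg.div_const c
    convert h2 using 1
    · rfl
    · rfl
    · rfl
    · field_simp
  have hint := exp_neg_integrableOn_Ioi 0 hc
  have htend : Filter.Tendsto (fun τ => -Real.exp (-c * τ) / c) Filter.atTop (nhds 0) := by
    have : Filter.Tendsto (fun τ : ℝ => -c * τ) Filter.atTop Filter.atBot :=
      Filter.tendsto_id.const_mul_atTop_of_neg (neg_neg_iff_pos.mpr hc)
    have := (Real.tendsto_exp_atBot.comp this).neg.div_const c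
    simpa using this
  have := integral_Ioi_of_hasDerivAt_of_tendsto' hderiv hint htend
  rw [this]; field_simp; simp

lemma shift_Ioi' (φ : ℝ → ℝ) (a : ℝ) :
    ∫ σ in Set.Ioi (0:ℝ), φ σ = ∫ r in Set.Ioi a, φ (r - a) := by
  rw [← integral_indicator measurableSet_Ioi, ← integral_indicator measurableSet_Ioi,
    ← integral_sub_right_eq_self ((Set.Ioi (0:ℝ)).indicator φ) a]
  congr 1; funext r
  simp [Set.indicator_apply, Set.mem_Ioi, sub_pos]

lemma conv_continuous {f : ℝ → ℝ} {C c : ℝ} (hc : 0 < c)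
    (hf : Continuous f) (hfb : ∀ s, |f s| ≤ C) :
    Continuous (fun s => ∫ σ in Set.Ioi (0:ℝ), Real.exp (-c * σ) * f (s - σ)) := by
  apply continuous_of_dominated (bound := fun σ => C * Real.exp (-c * σ))
  · intro s
    exact ((Real.continuous_exp.comp (continuous_const.mul continuous_id)).mul
      (hf.comp (continuous_const.sub continuous_id))).aestronglyMeasurable
  · intro s
    filter_upwards with σ
    rw [Real.norm_eq_abs, abs_mul, abs_of_pos (Real.exp_pos _)]
    calc Real.exp (-c*σ) * |f (s-σ)| ≤ Real.exp (-c*σ) * C :=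
          mul_le_mul_of_nonneg_left (hfb _) (Real.exp_pos _).le
      _ = C * Real.exp (-c*σ) := mul_comm _ _
  · exact (exp_neg_integrableOn_Ioi 0 hc).const_mul C
  · filter_upwards with σ
    exact (continuous_const.mul (hf.comp (continuous_id.sub continuous_const)))

lemma conv_bound {f : ℝ → ℝ} {C c : ℝ} (hc : 0 < c)
    (hfb : ∀ s, |f s| ≤ C) (s : ℝ) :
    |∫ σ in Set.Ioi (0:ℝ), Real.exp (-c * σ) * f (s - σ)| ≤ C / c := by
  have hCint : IntegrableOn (fun σ => C * Real.exp (-c * σ)) (Set.Ioi (0:ℝ)) :=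
    (exp_neg_integrableOn_Ioi 0 hc).const_mul C
  have h1 : |∫ σ in Set.Ioi (0:ℝ), Real.exp (-c * σ) * f (s - σ)|
      ≤ ∫ σ in Set.Ioi (0:ℝ), C * Real.exp (-c * σ) := by
    rw [← Real.norm_eq_abs]
    apply norm_integral_le_of_norm_le hCint
    filter_upwards with σ
    rw [Real.norm_eq_abs, abs_mul, abs_of_pos (Real.exp_pos _)]
    calc Real.exp (-c*σ) * |f (s-σ)| ≤ Real.exp (-c*σ) * C :=
          mul_le_mul_of_nonneg_left (hfb _) (Real.exp_pos _).le
      _ = C * Real.exp (-c*σ) := mul_comm _ _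
  calc |∫ σ in Set.Ioi (0:ℝ), Real.exp (-c * σ) * f (s - σ)|
      ≤ ∫ σ in Set.Ioi (0:ℝ), C * Real.exp (-c * σ) := h1
    _ = C * (1 / c) := by rw [integral_const_mul, integral_exp_neg_mul_Ioi' hc]
    _ = C / c := by ring

lemma integral_exp_Ioo {a r : ℝ} (ha : 0 < a) (hr : 0 < r) :
    ∫ τ in Set.Ioo (0:ℝ) r, Real.exp (-a*τ) = (1 - Real.exp (-a*r))/a := by
  have ha' : a ≠ 0 := ne_of_gt ha
  rw [← integral_Ioc_eq_integral_Ioo, ← intervalIntegral.integral_of_le hr.le,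
    intervalIntegral.integral_comp_mul_left (fun x => Real.exp x) (by linarith : (-a:ℝ) ≠ 0),
    integral_exp]
  simp only [mul_zero, Real.exp_zero, smul_eq_mul]
  field_simp
  ring

lemma fubini_step {f : ℝ → ℝ} {C a d : ℝ} (ha : 0 < a) (hd : 0 < d)
    (hf : Continuous f) (hfb : ∀ s, |f s| ≤ C) (t : ℝ) :
    ∫ τ in Set.Ioi (0:ℝ), Real.exp (-a*τ) * (∫ r in Set.Ioi τ, Real.exp (-d*r) * f (t-r))
      = ∫ r in Set.Ioi (0:ℝ), (Real.exp (-d*r) * f (t-r)) * ((1 - Real.exp (-a*r))/a) := by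
  set F : ℝ → ℝ := fun r => Real.exp (-d*r) * f (t-r) with hF
  have hC0 : 0 ≤ C := le_trans (abs_nonneg _) (hfb 0)
  have hFmeas : Measurable F :=
    (Real.measurable_exp.comp (measurable_const.mul measurable_id)).mul
      ((hf.measurable).comp (measurable_const.sub measurable_id))
  have hFbound : ∀ r, |F r| ≤ C * Real.exp (-d*r) := by
    intro r
    rw [hF, abs_mul, abs_of_pos (Real.exp_pos _)]
    calc Real.exp (-d*r) * |f (t-r)| ≤ Real.exp (-d*r) * C :=
          mul_le_mul_of_nonneg_left (hfb _) (Real.exp_pos _).le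
      _ = C * Real.exp (-d*r) := mul_comm _ _
  set S : Set (ℝ × ℝ) := {p : ℝ × ℝ | 0 < p.1 ∧ p.1 < p.2} with hS
  have hSmeas : MeasurableSet S :=
    (measurableSet_lt measurable_const measurable_fst).inter
      (measurableSet_lt measurable_fst measurable_snd)
  set G : ℝ × ℝ → ℝ := S.indicator (fun p => Real.exp (-a*p.1) * F p.2) with hG
  have hGmeas : Measurable G :=
    ((Real.measurable_exp.comp (measurable_const.mul measurable_fst)).mul
      (hFmeas.comp measurable_snd)).indicator hSmeas
  have hB1 : Integrable ((Set.Ioi (0:ℝ)).indicator (fun τ => Real.exp (-a*τ))) :=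
    (exp_neg_integrableOn_Ioi 0 ha).integrable_indicator measurableSet_Ioi
  have hB2 : Integrable ((Set.Ioi (0:ℝ)).indicator (fun r => C * Real.exp (-d*r))) :=
    IntegrableOn.integrable_indicator ((exp_neg_integrableOn_Ioi 0 hd).const_mul C)
      measurableSet_Ioi
  have hGint : Integrable G (volume.prod volume) := by
    refine Integrable.mono' (hB1.mul_prod hB2) hGmeas.aestronglyMeasurable ?_
    filter_upwards with p
    by_cases hp : p ∈ S
    · rw [hG, Set.indicator_of_mem hp]
      obtain ⟨h1, h2⟩ := hp
      rw [Set.indicator_of_mem (Set.mem_Ioi.mpr h1),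
        Set.indicator_of_mem (Set.mem_Ioi.mpr (lt_trans h1 h2))]
      rw [Real.norm_eq_abs, abs_mul, abs_of_pos (Real.exp_pos _)]
      exact mul_le_mul_of_nonneg_left (hFbound _) (Real.exp_pos _).le
    · rw [hG, Set.indicator_of_notMem hp, norm_zero]
      apply mul_nonneg <;>
        exact Set.indicator_nonneg (fun x _ => by positivity) _
  have hslice1 : ∀ τ : ℝ,
      (Set.Ioi (0:ℝ)).indicator (fun τ => Real.exp (-a*τ) * ∫ r in Set.Ioi τ, F r) τ
        = ∫ r, G (τ, r) := by
    intro τ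
    by_cases hτ : 0 < τ
    · rw [Set.indicator_of_mem (Set.mem_Ioi.mpr hτ)]
      have : (fun r => G (τ, r)) = (Set.Ioi τ).indicator (fun r => Real.exp (-a*τ) * F r) := by
        funext r
        by_cases hr : τ < r
        · rw [hG]
          rw [Set.indicator_of_mem (show (τ, r) ∈ S from ⟨hτ, hr⟩),
            Set.indicator_of_mem (Set.mem_Ioi.mpr hr)]
        · rw [hG, Set.indicator_of_notMem (show (τ, r) ∉ S from fun hmem => hr hmem.2),
            Set.indicator_of_notMem (by simpa using hr)]
      rw [this, integral_indicator measurableSet_Ioi, integral_const_mul]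
    · rw [Set.indicator_of_notMem (by simpa using hτ)]
      have : (fun r => G (τ, r)) = fun _ => (0:ℝ) := by
        funext r
        rw [hG, Set.indicator_of_notMem (show (τ, r) ∉ S from fun hmem => hτ hmem.1)]
      rw [this, integral_zero]
  have hslice2 : ∀ r : ℝ,
      (∫ τ, G (τ, r))
        = (Set.Ioi (0:ℝ)).indicator (fun r => F r * ((1 - Real.exp (-a*r))/a)) r := by
    intro r
    by_cases hr : 0 < r
    · rw [Set.indicator_of_mem (Set.mem_Ioi.mpr hr)]
      have : (fun τ => G (τ, r)) = (Set.Ioo (0:ℝ) r).indicator (fun τ => Real.exp (-a*τ) * F r) := by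
        funext τ
        by_cases hτ : τ ∈ Set.Ioo (0:ℝ) r
        · rw [hG, Set.indicator_of_mem (show (τ, r) ∈ S from ⟨hτ.1, hτ.2⟩),
            Set.indicator_of_mem hτ]
        · rw [hG, Set.indicator_of_notMem (show (τ, r) ∉ S from fun hmem => hτ ⟨hmem.1, hmem.2⟩),
            Set.indicator_of_notMem hτ]
      rw [this, integral_indicator measurableSet_Ioo]
      have h2 : ∫ τ in Set.Ioo (0:ℝ) r, Real.exp (-a*τ) * F r
          = (∫ τ in Set.Ioo (0:ℝ) r, Real.exp (-a*τ)) * F r := by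
        rw [integral_mul_const]
      rw [h2, integral_exp_Ioo ha hr]; ring
    · rw [Set.indicator_of_notMem (by simpa using hr)]
      have : (fun τ => G (τ, r)) = fun _ => (0:ℝ) := by
        funext τ
        rw [hG, Set.indicator_of_notMem
          (show (τ, r) ∉ S from fun hmem => hr (lt_trans hmem.1 hmem.2))]
      rw [this, integral_zero]
  calc ∫ τ in Set.Ioi (0:ℝ), Real.exp (-a*τ) * (∫ r in Set.Ioi τ, F r)
      = ∫ τ, (Set.Ioi (0:ℝ)).indicator (fun τ => Real.exp (-a*τ) * ∫ r in Set.Ioi τ, F r) τ := by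
        rw [integral_indicator measurableSet_Ioi]
    _ = ∫ τ, ∫ r, G (τ, r) := by simp_rw [hslice1]
    _ = ∫ r, ∫ τ, G (τ, r) := integral_integral_swap hGint
    _ = ∫ r, (Set.Ioi (0:ℝ)).indicator (fun r => F r * ((1 - Real.exp (-a*r))/a)) r := by
        simp_rw [hslice2]
    _ = ∫ r in Set.Ioi (0:ℝ), F r * ((1 - Real.exp (-a*r))/a) := by
        rw [integral_indicator measurableSet_Ioi]

/-- The fixed point identity. -/
lemma fixed_point {f : ℝ → ℝ} {C α β : ℝ} (hα : 0 < α) (hαβ : α < β)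
    (hf : Continuous f) (hfb : ∀ s, |f s| ≤ C) (t : ℝ) :
    (fun s => f s + α * ∫ σ in Set.Ioi (0:ℝ), Real.exp (-(β-α) * σ) * f (s - σ)) t
      = f t + α * ∫ τ in Set.Ioi (0:ℝ), Real.exp (-β * τ) *
          (fun s => f s + α * ∫ σ in Set.Ioi (0:ℝ), Real.exp (-(β-α) * σ) * f (s - σ)) (t - τ) := by
  have hd : 0 < β - α := by linarith
  have hβ : 0 < β := lt_trans hα hαβ
  have hα' : α ≠ 0 := ne_of_gt hα
  have hC0 : 0 ≤ C := le_trans (abs_nonneg _) (hfb 0)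
  set hcv : ℝ → ℝ := fun s => ∫ σ in Set.Ioi (0:ℝ), Real.exp (-(β-α) * σ) * f (s - σ) with hhcv
  have hhcont : Continuous hcv := conv_continuous hd hf hfb
  have hhb : ∀ s, |hcv s| ≤ C / (β - α) := fun s => conv_bound hd hfb s
  set F : ℝ → ℝ := fun r => Real.exp (-(β-α)*r) * f (t-r) with hF
  have hconv : ∀ τ : ℝ, Real.exp (-β*τ) * hcv (t-τ)
      = Real.exp (-α*τ) * ∫ r in Set.Ioi τ, F r := by
    intro τ
    have h1 : hcv (t-τ) = ∫ r in Set.Ioi τ, Real.exp (-(β-α) * (r-τ)) * f (t - τ - (r-τ)) :=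
      shift_Ioi' (fun σ => Real.exp (-(β-α) * σ) * f (t - τ - σ)) τ
    have h2 : (fun r => Real.exp (-(β-α) * (r-τ)) * f (t - τ - (r-τ)))
        = fun r => Real.exp ((β-α)*τ) * (Real.exp (-(β-α)*r) * f (t-r)) := by
      funext r
      rw [show t - τ - (r - τ) = t - r by ring, ← mul_assoc, ← Real.exp_add]
      ring_nf
    rw [h1, h2, integral_const_mul, ← mul_assoc, ← Real.exp_add,
      show -β*τ + (β-α)*τ = -α*τ from by ring]
  have hIf : IntegrableOn (fun τ => Real.exp (-β * τ) * f (t - τ)) (Set.Ioi 0) :=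
    conv_integrable hβ hf.measurable hfb t
  have hIh : IntegrableOn (fun τ => Real.exp (-β * τ) * hcv (t - τ)) (Set.Ioi 0) :=
    conv_integrable hβ hhcont.measurable hhb t
  have hsplit : ∫ τ in Set.Ioi (0:ℝ), Real.exp (-β * τ) * (f (t-τ) + α * hcv (t-τ))
      = (∫ τ in Set.Ioi (0:ℝ), Real.exp (-β * τ) * f (t-τ))
        + α * ∫ τ in Set.Ioi (0:ℝ), Real.exp (-β * τ) * hcv (t-τ) := by
    have heq : (fun τ => Real.exp (-β * τ) * (f (t-τ) + α * hcv (t-τ)))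
        = fun τ => (Real.exp (-β * τ) * f (t-τ)) + α * (Real.exp (-β * τ) * hcv (t-τ)) := by
      funext τ; ring
    rw [heq, integral_add hIf (hIh.const_mul α), integral_const_mul]
  have hfub : ∫ τ in Set.Ioi (0:ℝ), Real.exp (-β * τ) * hcv (t-τ)
      = ∫ r in Set.Ioi (0:ℝ), F r * ((1 - Real.exp (-α*r))/α) := by
    have heq : (fun τ => Real.exp (-β * τ) * hcv (t-τ))
        = fun τ => Real.exp (-α*τ) * ∫ r in Set.Ioi τ, F r := funext hconv
    rw [heq]
    exact fubini_step hα hd hf hfb t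
  have hIF : IntegrableOn F (Set.Ioi 0) := conv_integrable hd hf.measurable hfb t
  have hIFe : IntegrableOn (fun r => Real.exp (-β * r) * f (t - r)) (Set.Ioi 0) :=
    conv_integrable hβ hf.measurable hfb t
  have hstep4 : α * ∫ r in Set.Ioi (0:ℝ), F r * ((1 - Real.exp (-α*r))/α)
      = (∫ r in Set.Ioi (0:ℝ), F r) - ∫ r in Set.Ioi (0:ℝ), Real.exp (-β * r) * f (t - r) := by
    rw [← integral_const_mul]
    have heq : (fun r => α * (F r * ((1 - Real.exp (-α*r))/α)))
        = fun r => F r - Real.exp (-β * r) * f (t - r) := by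
      funext r
      have hx : Real.exp (-β * r) = Real.exp (-(β-α)*r) * Real.exp (-α*r) := by
        rw [← Real.exp_add]; ring_nf
      rw [hF, hx]
      field_simp
    rw [heq, integral_sub hIF hIFe]
  simp only [← hhcv]
  rw [hsplit, hfub, hstep4]
  have hLHS : (∫ σ in Set.Ioi (0:ℝ), Real.exp (-(β-α) * σ) * f (t - σ))
      = ∫ r in Set.Ioi (0:ℝ), F r := rfl
  rw [hLHS]
  ring

theorem stmt_1 (u f : ℝ → ℝ) (α β : ℝ) (hα : 0 < α) (hαβ : α < β)
    (hu_bd : ∃ C, ∀ t, |u t| ≤ C) (hf_bd : ∃ C, ∀ t, |f t| ≤ C)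
    (hu_uc : UniformContinuous u) (hf_uc : UniformContinuous f)
    (h : ∀ t : ℝ, u t ≤ f t + α * ∫ τ in Set.Ioi (0:ℝ), Real.exp (-β * τ) * u (t - τ)) :
    ∀ t : ℝ, u t ≤ f t + α * ∫ τ in Set.Ioi (0:ℝ), Real.exp (-(β - α) * τ) * f (t - τ) := by
  obtain ⟨Cu, hub⟩ := hu_bd
  obtain ⟨Cf, hfb⟩ := hf_bd
  have hβ : 0 < β := lt_trans hα hαβ
  have hd : 0 < β - α := by linarith
  have hfc : Continuous f := hf_uc.continuous
  have huc : Continuous u := hu_uc.continuous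
  set g : ℝ → ℝ := fun s => f s + α * ∫ σ in Set.Ioi (0:ℝ), Real.exp (-(β-α) * σ) * f (s - σ)
    with hg
  have hgcont : Continuous g :=
    hfc.add (continuous_const.mul (conv_continuous hd hfc hfb))
  set Cg : ℝ := Cf + α * (Cf / (β - α)) with hCg
  have hgb : ∀ s, |g s| ≤ Cg := by
    intro s
    calc |g s| ≤ |f s| + |α * ∫ σ in Set.Ioi (0:ℝ), Real.exp (-(β-α) * σ) * f (s - σ)| :=
          abs_add_le _ _
      _ ≤ Cf + α * (Cf / (β - α)) := by
          refine add_le_add (hfb s) ?_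
          rw [abs_mul, abs_of_pos hα]
          exact mul_le_mul_of_nonneg_left (conv_bound hd hfb s) hα.le
  set d : ℝ → ℝ := fun s => u s - g s with hdd
  have hdbdd : BddAbove (Set.range d) := by
    refine ⟨Cu + Cg, ?_⟩
    rintro x ⟨s, rfl⟩
    have h1 := abs_le.mp (hub s)
    have h2 := abs_le.mp (hgb s)
    simp only [hdd]
    linarith [h1.2, h2.1]
  have hdne : (Set.range d).Nonempty := ⟨d 0, 0, rfl⟩
  set M : ℝ := sSup (Set.range d) with hM
  have hdleM : ∀ s, d s ≤ M := fun s => le_csSup hdbdd ⟨s, rfl⟩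
  have key : ∀ s, d s ≤ α / β * M := by
    intro s
    have hfix := fixed_point hα hαβ hfc hfb s
    have hIu : IntegrableOn (fun τ => Real.exp (-β * τ) * u (s - τ)) (Set.Ioi 0) :=
      conv_integrable hβ huc.measurable hub s
    have hIg : IntegrableOn (fun τ => Real.exp (-β * τ) * g (s - τ)) (Set.Ioi 0) :=
      conv_integrable hβ hgcont.measurable hgb s
    have h1 : d s ≤ α * ((∫ τ in Set.Ioi (0:ℝ), Real.exp (-β * τ) * u (s - τ))
        - ∫ τ in Set.Ioi (0:ℝ), Real.exp (-β * τ) * g (s - τ)) := by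
      have hus := h s
      have hgs : g s = f s + α * ∫ τ in Set.Ioi (0:ℝ), Real.exp (-β * τ) * g (s - τ) := hfix
      simp only [hdd]
      rw [mul_sub]
      linarith [hus, hgs]
    have h2 : (∫ τ in Set.Ioi (0:ℝ), Real.exp (-β * τ) * u (s - τ))
        - ∫ τ in Set.Ioi (0:ℝ), Real.exp (-β * τ) * g (s - τ)
        = ∫ τ in Set.Ioi (0:ℝ), Real.exp (-β * τ) * d (s - τ) := by
      rw [← integral_sub hIu hIg]
      congr 1; funext τ; simp only [hdd]; ring
    have h3 : (∫ τ in Set.Ioi (0:ℝ), Real.exp (-β * τ) * d (s - τ))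
        ≤ ∫ τ in Set.Ioi (0:ℝ), Real.exp (-β * τ) * M := by
      refine integral_mono ?_ ?_ ?_
      · have heq : (fun τ => Real.exp (-β * τ) * d (s - τ))
            = fun τ => (Real.exp (-β * τ) * u (s - τ)) - Real.exp (-β * τ) * g (s - τ) := by
          funext τ; simp only [hdd]; ring
        rw [heq]; exact hIu.sub hIg
      · exact (exp_neg_integrableOn_Ioi 0 hβ).mul_const M
      · intro τ
        exact mul_le_mul_of_nonneg_left (hdleM (s - τ)) (Real.exp_pos _).le
    have h4 : (∫ τ in Set.Ioi (0:ℝ), Real.exp (-β * τ) * M) = 1 / β * M := by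
      rw [integral_mul_const, integral_exp_neg_mul_Ioi' hβ]
    calc d s ≤ α * ((∫ τ in Set.Ioi (0:ℝ), Real.exp (-β * τ) * u (s - τ))
        - ∫ τ in Set.Ioi (0:ℝ), Real.exp (-β * τ) * g (s - τ)) := h1
      _ = α * ∫ τ in Set.Ioi (0:ℝ), Real.exp (-β * τ) * d (s - τ) := by rw [h2]
      _ ≤ α * ∫ τ in Set.Ioi (0:ℝ), Real.exp (-β * τ) * M :=
          mul_le_mul_of_nonneg_left h3 hα.le
      _ = α / β * M := by rw [h4]; ring
  have hMle : M ≤ α / β * M := csSup_le hdne (by rintro x ⟨s, rfl⟩; exact key s)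
  have hc1 : α / β < 1 := (div_lt_one hβ).mpr hαβ
  have hM0 : M ≤ 0 := by
    by_contra hMpos
    push_neg at hMpos
    have := mul_lt_mul_of_pos_right hc1 hMpos
    rw [one_mul] at this
    linarith
  intro t
  have hfin : d t ≤ 0 := le_trans (hdleM t) hM0
  simp only [hdd, hg] at hfin
  linarith
end

section
/- Let X be a real normed space, x₁, x₂, y₁, y₂ ∈ X, ω > 0 and f ∈ ℝ. Suppose ‖x₁ - x₂‖ ≤ ‖x₁ - x₂ - λ(y₁ - y₂)‖ + λ f for all 0 < λ < ω. Then for all 0 < λ, μ < ω: (λ + μ)‖x₁ - x₂‖ ≤ λ‖x₂ - x₁ - μ y₂‖ + μ‖x₁ - x₂ - λ y₁‖ + λμ f. -/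
theorem stmt_7 (X : Type*) [NormedAddCommGroup X] [NormedSpace ℝ X]
    (x₁ x₂ y₁ y₂ : X) (ω : ℝ) (hω : 0 < ω) (f : ℝ)
    (h : ∀ l : ℝ, 0 < l → l < ω →
      ‖x₁ - x₂‖ ≤ ‖x₁ - x₂ - l • (y₁ - y₂)‖ + l * f) :
    ∀ l μ : ℝ, 0 < l → l < ω → 0 < μ → μ < ω →
      (l + μ) * ‖x₁ - x₂‖ ≤
        l * ‖x₂ - x₁ - μ • y₂‖ + μ * ‖x₁ - x₂ - l • y₁‖ + l * μ * f := by
  intro l μ hl hlω hμ hμω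
  have hspos : (0:ℝ) < l + μ := by linarith
  have hs0 : (l + μ) ≠ 0 := hspos.ne'
  set ν := l * μ / (l + μ) with hν
  have hνpos : 0 < ν := by positivity
  have hνω : ν < ω := by
    have : ν < l := by
      rw [hν, div_lt_iff₀ hspos]; nlinarith
    linarith
  have key := h ν hνpos hνω
  have hdecomp : x₁ - x₂ - ν • (y₁ - y₂)
      = (μ / (l + μ)) • (x₁ - x₂ - l • y₁) + (l / (l + μ)) • (x₁ - x₂ + μ • y₂) := by
    rw [hν]
    match_scalars
    all_goals field_simp
    all_goals try ring
    all_goals exact Or.inl trivial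
  have hnorm : ‖x₁ - x₂ - ν • (y₁ - y₂)‖ ≤
      (μ / (l + μ)) * ‖x₁ - x₂ - l • y₁‖ + (l / (l + μ)) * ‖x₂ - x₁ - μ • y₂‖ := by
    rw [hdecomp]
    have h2 : ‖x₁ - x₂ + μ • y₂‖ = ‖x₂ - x₁ - μ • y₂‖ := by
      rw [← norm_neg]; congr 1; abel
    calc ‖(μ / (l + μ)) • (x₁ - x₂ - l • y₁) + (l / (l + μ)) • (x₁ - x₂ + μ • y₂)‖
        ≤ ‖(μ / (l + μ)) • (x₁ - x₂ - l • y₁)‖ + ‖(l / (l + μ)) • (x₁ - x₂ + μ • y₂)‖ :=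
          norm_add_le _ _
      _ = (μ / (l + μ)) * ‖x₁ - x₂ - l • y₁‖ + (l / (l + μ)) * ‖x₂ - x₁ - μ • y₂‖ := by
          rw [norm_smul, norm_smul, h2, Real.norm_eq_abs, Real.norm_eq_abs,
            abs_of_pos (by positivity), abs_of_pos (by positivity)]
  have := key.trans (by linarith : ‖x₁ - x₂ - ν • (y₁ - y₂)‖ + ν * f ≤
      (μ / (l + μ)) * ‖x₁ - x₂ - l • y₁‖ + (l / (l + μ)) * ‖x₂ - x₁ - μ • y₂‖ + ν * f)
  have hmul := mul_le_mul_of_nonneg_left this hspos.le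
  rw [hν] at hmul
  have e1 : (l + μ) * ((μ / (l + μ)) * ‖x₁ - x₂ - l • y₁‖ +
      (l / (l + μ)) * ‖x₂ - x₁ - μ • y₂‖ + l * μ / (l + μ) * f)
      = l * ‖x₂ - x₁ - μ • y₂‖ + μ * ‖x₁ - x₂ - l • y₁‖ + l * μ * f := by
    field_simp; ring
  linarith [hmul, e1 ▸ hmul]
end

section
/- For all R > 0, (1/R) ∫₀^R ∫₀^R I₀(2√(xy)) e^{-x-y} dy dx ≤ 1, where I₀ is the modified Bessel function of the first kind of order zero. -/
open MeasureTheory Real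
open scoped ENNReal

/-- The modified Bessel function of the first kind of order zero. -/
noncomputable def besselI0 (z : ℝ) : ℝ :=
  ∑' k : ℕ, (z / 2) ^ (2 * k) / ((Nat.factorial k : ℝ)) ^ 2

namespace Stmt10Aux

open Set

noncomputable def g (k : ℕ) (t : ℝ) : ℝ := t ^ k * Real.exp (-t) / (Nat.factorial k : ℝ)

lemma g_nonneg {k : ℕ} {t : ℝ} (ht : 0 ≤ t) : 0 ≤ g k t := by
  unfold g; positivity

lemma measurable_g (k : ℕ) : Measurable (g k) := by
  unfold g; fun_prop

lemma summable_g (t : ℝ) : Summable fun k => g k t := by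
  refine ((Real.summable_pow_div_factorial t).mul_right (Real.exp (-t))).congr fun k => ?_
  unfold g; ring

lemma tsum_g (t : ℝ) : ∑' k, g k t = 1 := by
  have h1 : (fun k : ℕ => g k t) = fun k : ℕ => t ^ k / (Nat.factorial k : ℝ) * Real.exp (-t) := by
    funext k; unfold g; ring
  have h2 : ∑' k : ℕ, t ^ k / (Nat.factorial k : ℝ) = Real.exp t := by
    rw [Real.exp_eq_exp_ℝ, NormedSpace.exp_eq_tsum_div]
  rw [h1, tsum_mul_right, h2, ← Real.exp_add]
  simp

lemma summable_gg {x y : ℝ} (hx : 0 ≤ x) (hy : 0 ≤ y) :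
    Summable fun k => g k x * g k y := by
  refine Summable.of_nonneg_of_le (fun k => mul_nonneg (g_nonneg hx) (g_nonneg hy))
    (fun k => ?_) (Real.summable_pow_div_factorial (x * y))
  have hfac : (1:ℝ) ≤ (Nat.factorial k : ℝ) := by exact_mod_cast Nat.one_le_iff_ne_zero.mpr (Nat.factorial_ne_zero k)
  have h1 : g k x * g k y = (x * y) ^ k / ((Nat.factorial k : ℝ) * (Nat.factorial k : ℝ))
      * (Real.exp (-x) * Real.exp (-y)) := by
    unfold g; rw [mul_pow]; ring
  rw [h1]
  have h2 : Real.exp (-x) * Real.exp (-y) ≤ 1 := by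
    rw [← Real.exp_add]
    exact Real.exp_le_one_iff.mpr (by linarith)
  calc (x * y) ^ k / ((Nat.factorial k : ℝ) * (Nat.factorial k : ℝ)) * (Real.exp (-x) * Real.exp (-y))
      ≤ (x * y) ^ k / ((Nat.factorial k : ℝ) * (Nat.factorial k : ℝ)) * 1 := by
        refine mul_le_mul_of_nonneg_left h2 (by positivity)
    _ = (x * y) ^ k / ((Nat.factorial k : ℝ) * (Nat.factorial k : ℝ)) := mul_one _
    _ ≤ (x * y) ^ k / (Nat.factorial k : ℝ) := by
        refine div_le_div_of_nonneg_left (by positivity) (by positivity) ?_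
        nlinarith [hfac]

lemma key {x y : ℝ} (hx : 0 ≤ x) (hy : 0 ≤ y) :
    besselI0 (2 * Real.sqrt (x * y)) * Real.exp (-x - y) = ∑' k, g k x * g k y := by
  have hxy : 0 ≤ x * y := mul_nonneg hx hy
  have h1 : besselI0 (2 * Real.sqrt (x * y)) =
      ∑' k : ℕ, (x * y) ^ k / (Nat.factorial k : ℝ) ^ 2 := by
    unfold besselI0
    congr 1; funext k
    rw [mul_div_cancel_left₀ _ (two_ne_zero), pow_mul, Real.sq_sqrt hxy]
  rw [h1, ← tsum_mul_right]
  congr 1; funext k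
  have he : Real.exp (-x - y) = Real.exp (-x) * Real.exp (-y) := by
    rw [← Real.exp_add]; ring_nf
  unfold g
  rw [he, sq]
  field_simp
  ring

lemma besselI0_nonneg (z : ℝ) : 0 ≤ besselI0 z := by
  refine tsum_nonneg fun k => ?_
  rw [pow_mul]
  positivity

lemma integrableOn_g (k : ℕ) : IntegrableOn (g k) (Ioi (0:ℝ)) := by
  have h := (Real.GammaIntegral_convergent (s := (k : ℝ) + 1) (by positivity)).div_const
    (Nat.factorial k : ℝ)
  refine h.congr (Filter.EventuallyEq.of_eq (funext fun x => ?_))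
  rw [add_sub_cancel_right, Real.rpow_natCast]
  unfold g; ring

lemma integral_g (k : ℕ) : ∫ x in Ioi (0:ℝ), g k x = 1 := by
  have h1 : ∫ x in Ioi (0:ℝ), Real.exp (-x) * x ^ (((k : ℝ) + 1) - 1) = (Nat.factorial k : ℝ) := by
    rw [← Real.Gamma_eq_integral (by positivity)]
    exact_mod_cast Real.Gamma_nat_eq_factorial k
  have h2 : ∀ x : ℝ, g k x = Real.exp (-x) * x ^ (((k : ℝ) + 1) - 1) / (Nat.factorial k : ℝ) := by
    intro x
    rw [add_sub_cancel_right, Real.rpow_natCast]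
    unfold g; ring
  simp_rw [h2]
  rw [integral_div, h1, div_self (by exact_mod_cast Nat.factorial_ne_zero k)]

noncomputable def A (R : ℝ) (k : ℕ) : ℝ≥0∞ := ∫⁻ y in Ioc (0:ℝ) R, ENNReal.ofReal (g k y)

lemma A_le_one (R : ℝ) (k : ℕ) : A R k ≤ 1 := by
  have h1 : A R k ≤ ∫⁻ y in Ioi (0:ℝ), ENNReal.ofReal (g k y) :=
    lintegral_mono' (Measure.restrict_mono Ioc_subset_Ioi_self le_rfl) le_rfl
  have h2 : ∫⁻ y in Ioi (0:ℝ), ENNReal.ofReal (g k y) = ENNReal.ofReal (∫ y in Ioi (0:ℝ), g k y) := by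
    rw [← ofReal_integral_eq_lintegral_ofReal (integrableOn_g k)]
    exact (ae_restrict_iff' measurableSet_Ioi).2 (Filter.Eventually.of_forall fun y hy => g_nonneg hy.le)
  rw [h2, integral_g, ENNReal.ofReal_one] at h1
  exact h1

lemma tsum_ofReal_g {t : ℝ} (ht : 0 ≤ t) :
    ∑' k, ENNReal.ofReal (g k t) = 1 := by
  rw [← ENNReal.ofReal_tsum_of_nonneg (fun k => g_nonneg ht) (summable_g t), tsum_g,
    ENNReal.ofReal_one]

lemma sum_A {R : ℝ} (hR : 0 ≤ R) : ∑' k, A R k = ENNReal.ofReal R := by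
  unfold A
  rw [← lintegral_tsum (fun k => ((measurable_g k).ennreal_ofReal).aemeasurable)]
  have h : ∀ᵐ y ∂(volume.restrict (Ioc (0:ℝ) R)),
      ∑' k, ENNReal.ofReal (g k y) = 1 := by
    refine (ae_restrict_iff' measurableSet_Ioc).2 (Filter.Eventually.of_forall fun y hy => ?_)
    exact tsum_ofReal_g hy.1.le
  rw [lintegral_congr_ae h, lintegral_one, Measure.restrict_apply_univ, Real.volume_Ioc, sub_zero]

end Stmt10Aux

open Stmt10Aux Set

theorem stmt_10 :
    ∀ R : ℝ, 0 < R →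
      (1 / R) * ∫ x in (0:ℝ)..R, ∫ y in (0:ℝ)..R,
        besselI0 (2 * Real.sqrt (x * y)) * Real.exp (-x - y) ≤ 1 := by
  intro R hR
  have hle : (0:ℝ) ≤ R := hR.le
  set f : ℝ → ℝ → ℝ := fun x y => besselI0 (2 * Real.sqrt (x * y)) * Real.exp (-x - y) with hf
  have hfnn : ∀ x y : ℝ, 0 ≤ f x y := fun x y =>
    mul_nonneg (besselI0_nonneg _) (Real.exp_nonneg _)
  -- the inner lintegral
  set I : ℝ → ℝ≥0∞ := fun x => ∫⁻ y in Ioc (0:ℝ) R, ENNReal.ofReal (f x y) with hI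
  have hofReal : ∀ x ∈ Ioc (0:ℝ) R, ∀ y ∈ Ioc (0:ℝ) R,
      ENNReal.ofReal (f x y) = ∑' k, ENNReal.ofReal (g k x) * ENNReal.ofReal (g k y) := by
    intro x hx y hy
    rw [hf]
    simp only
    rw [key hx.1.le hy.1.le,
      ENNReal.ofReal_tsum_of_nonneg (fun k => mul_nonneg (g_nonneg hx.1.le) (g_nonneg hy.1.le))
        (summable_gg hx.1.le hy.1.le)]
    exact tsum_congr fun k => ENNReal.ofReal_mul (g_nonneg hx.1.le)
  have hIeq : ∀ x ∈ Ioc (0:ℝ) R, I x = ∑' k, ENNReal.ofReal (g k x) * A R k := by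
    intro x hx
    rw [hI]
    simp only
    have h1 : ∫⁻ y in Ioc (0:ℝ) R, ENNReal.ofReal (f x y) =
        ∫⁻ y in Ioc (0:ℝ) R, ∑' k, ENNReal.ofReal (g k x) * ENNReal.ofReal (g k y) := by
      refine lintegral_congr_ae ((ae_restrict_iff' measurableSet_Ioc).2
        (Filter.Eventually.of_forall fun y hy => hofReal x hx y hy))
    rw [h1, lintegral_tsum (fun k =>
      (((measurable_g k).ennreal_ofReal).const_mul _).aemeasurable)]
    exact tsum_congr fun k => lintegral_const_mul' _ _ ENNReal.ofReal_ne_top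
  have hIle : ∀ x ∈ Ioc (0:ℝ) R, I x ≤ 1 := by
    intro x hx
    rw [hIeq x hx]
    calc ∑' k, ENNReal.ofReal (g k x) * A R k
        ≤ ∑' k, ENNReal.ofReal (g k x) * 1 :=
          ENNReal.tsum_le_tsum fun k => mul_le_mul_right (A_le_one R k) _
      _ = ∑' k, ENNReal.ofReal (g k x) := by simp
      _ = 1 := tsum_ofReal_g hx.1.le
  -- the inner Bochner integral equals toReal of I
  have hinner : ∀ x ∈ Ioc (0:ℝ) R, (∫ y in Ioc (0:ℝ) R, f x y) = (I x).toReal := by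
    intro x hx
    rw [hI]
    simp only
    rw [integral_eq_lintegral_of_nonneg_ae (Filter.Eventually.of_forall fun y => hfnn x y) ?_]
    · -- measurability of y ↦ f x y
      have hm : Measurable fun y => (∑' k, ENNReal.ofReal (g k x) * ENNReal.ofReal (g k y)).toReal :=
        (Measurable.ennreal_tsum fun k => ((measurable_g k).ennreal_ofReal).const_mul _).ennreal_toReal
      refine (hm.aestronglyMeasurable).congr ?_
      refine (ae_restrict_iff' measurableSet_Ioc).2 (Filter.Eventually.of_forall fun y hy => ?_)
      show (∑' k, ENNReal.ofReal (g k x) * ENNReal.ofReal (g k y)).toReal = f x y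
      rw [← hofReal x hx y hy, ENNReal.toReal_ofReal (hfnn x y)]
  -- F := inner integral
  set F : ℝ → ℝ := fun x => ∫ y in Ioc (0:ℝ) R, f x y with hF
  have hFnn : ∀ x, 0 ≤ F x := fun x =>
    setIntegral_nonneg measurableSet_Ioc fun y _ => hfnn x y
  have houter : (∫ x in Ioc (0:ℝ) R, F x) = (∫⁻ x in Ioc (0:ℝ) R, ENNReal.ofReal (F x)).toReal := by
    rw [integral_eq_lintegral_of_nonneg_ae (Filter.Eventually.of_forall hFnn) ?_]
    · have hm : Measurable fun x => (∑' k, ENNReal.ofReal (g k x) * A R k).toReal :=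
        (Measurable.ennreal_tsum fun k => ((measurable_g k).ennreal_ofReal).mul_const _).ennreal_toReal
      refine (hm.aestronglyMeasurable).congr ?_
      refine (ae_restrict_iff' measurableSet_Ioc).2 (Filter.Eventually.of_forall fun x hx => ?_)
      rw [hF]
      simp only
      rw [hinner x hx, hIeq x hx]
  have hlout : (∫⁻ x in Ioc (0:ℝ) R, ENNReal.ofReal (F x)) = ∑' k, A R k * A R k := by
    have h1 : ∫⁻ x in Ioc (0:ℝ) R, ENNReal.ofReal (F x) =
        ∫⁻ x in Ioc (0:ℝ) R, ∑' k, ENNReal.ofReal (g k x) * A R k := by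
      refine lintegral_congr_ae ((ae_restrict_iff' measurableSet_Ioc).2
        (Filter.Eventually.of_forall fun x hx => ?_))
      rw [hF]
      simp only
      rw [hinner x hx, ENNReal.ofReal_toReal, hIeq x hx]
      exact ne_top_of_le_ne_top ENNReal.one_ne_top (hIle x hx)
    rw [h1, lintegral_tsum (fun k =>
      (((measurable_g k).ennreal_ofReal).mul_const _).aemeasurable)]
    refine tsum_congr fun k => ?_
    rw [lintegral_mul_const' _ _ (ne_top_of_le_ne_top ENNReal.one_ne_top (A_le_one R k))]
    rfl
  have hsum_le : ∑' k, A R k * A R k ≤ ENNReal.ofReal R := by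
    rw [← sum_A hle]
    exact ENNReal.tsum_le_tsum fun k => by
      calc A R k * A R k ≤ 1 * A R k := mul_le_mul_left (A_le_one R k) _
        _ = A R k := one_mul _
  -- put it together
  have hmain : (∫ x in Ioc (0:ℝ) R, F x) ≤ R := by
    rw [houter, hlout]
    calc (∑' k, A R k * A R k).toReal ≤ (ENNReal.ofReal R).toReal :=
          ENNReal.toReal_mono ENNReal.ofReal_ne_top hsum_le
      _ = R := ENNReal.toReal_ofReal hle
  have hrw : (∫ x in (0:ℝ)..R, ∫ y in (0:ℝ)..R, f x y) = ∫ x in Ioc (0:ℝ) R, F x := by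
    rw [intervalIntegral.integral_of_le hle]
    refine setIntegral_congr_fun measurableSet_Ioc fun x hx => ?_
    rw [intervalIntegral.integral_of_le hle]
  calc (1 / R) * ∫ x in (0:ℝ)..R, ∫ y in (0:ℝ)..R, f x y
      ≤ (1 / R) * R := by
        rw [hrw]
        exact mul_le_mul_of_nonneg_left hmain (by positivity)
    _ = 1 := by field_simp
end

section
/- lim_{R→∞} (1/R²) ∫₀^R ∫₀^R I₀(2√(xy)) e^{-x-y} dy dx = 0, where I₀ is the modified Bessel function of order zero. -/
open MeasureTheory Real Filter

lemma factorial_two_mul_le (k : ℕ) :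
    Nat.factorial (2 * k) ≤ 4 ^ k * (Nat.factorial k) ^ 2 := by
  induction k with
  | zero => simp
  | succ n ih =>
    have h : 2 * (n + 1) = (2 * n + 1) + 1 := by ring
    rw [h, Nat.factorial_succ, Nat.factorial_succ, Nat.factorial_succ]
    calc (2 * n + 1 + 1) * ((2 * n + 1) * Nat.factorial (2 * n))
        ≤ (2 * n + 2) * ((2 * n + 2) * (4 ^ n * (Nat.factorial n) ^ 2)) := by
          apply Nat.mul_le_mul (by omega)
          exact Nat.mul_le_mul (by omega) ih
      _ = 4 ^ (n + 1) * ((n + 1) * Nat.factorial n) ^ 2 := by ring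

lemma gI0_summable (w : ℝ) :
    Summable (fun k : ℕ => w ^ k / (Nat.factorial k : ℝ) ^ 2) := by
  apply Summable.of_norm
  apply Summable.of_nonneg_of_le (fun k => norm_nonneg _) _
    (Real.summable_pow_div_factorial |w|)
  intro k
  have h1 : (1 : ℝ) ≤ (Nat.factorial k : ℝ) := by
    exact_mod_cast Nat.one_le_iff_ne_zero.2 (Nat.factorial_ne_zero k)
  have h0 : (0 : ℝ) < (Nat.factorial k : ℝ) := by linarith
  rw [Real.norm_eq_abs, abs_div, abs_pow, abs_pow, Nat.abs_cast]
  apply div_le_div_of_nonneg_left (by positivity) (by positivity)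
  nlinarith

lemma besselI0_eq (z : ℝ) :
    besselI0 z = ∑' k : ℕ, ((z / 2) ^ 2) ^ k / (Nat.factorial k : ℝ) ^ 2 := by
  unfold besselI0
  congr 1
  ext k
  rw [pow_mul]

noncomputable def gI0 (w : ℝ) : ℝ := ∑' k : ℕ, w ^ k / (Nat.factorial k : ℝ) ^ 2

lemma gI0_continuous : Continuous gI0 := by
  rw [continuous_iff_continuousAt]
  intro w
  have hball : Metric.ball w (1 : ℝ) ∈ nhds w := Metric.ball_mem_nhds w one_pos
  have hC : ∀ x ∈ Metric.ball w (1 : ℝ), |x| ≤ |w| + 1 := by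
    intro x hx
    rw [Metric.mem_ball, Real.dist_eq] at hx
    cases abs_cases x <;> cases abs_cases w <;> cases abs_cases (x - w) <;> linarith
  have hcont : ContinuousOn gI0 (Metric.ball w (1 : ℝ)) := by
    apply continuousOn_tsum (f := fun k x => x ^ k / (Nat.factorial k : ℝ) ^ 2)
      (u := fun k => (|w| + 1) ^ k / (Nat.factorial k : ℝ) ^ 2)
    · intro k; exact (continuous_pow k).continuousOn.div_const _
    · exact gI0_summable _
    · intro k x hx
      rw [Real.norm_eq_abs, abs_div, abs_pow, abs_pow, Nat.abs_cast]
      apply div_le_div_of_nonneg_right _ (by positivity)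
      exact pow_le_pow_left₀ (abs_nonneg x) (hC x hx) k
  exact hcont.continuousAt hball

lemma besselI0_continuous : Continuous besselI0 := by
  have : besselI0 = fun z => gI0 ((z / 2) ^ 2) := by
    funext z; rw [besselI0_eq]; rfl
  rw [this]
  exact gI0_continuous.comp (by fun_prop)

lemma besselI0_nonneg (z : ℝ) : 0 ≤ besselI0 z := by
  rw [besselI0_eq]
  apply tsum_nonneg
  intro k
  positivity

lemma besselI0_le_exp {z : ℝ} (hz : 0 ≤ z) : besselI0 z ≤ Real.exp z := by
  have he : Real.exp z = ∑' n : ℕ, z ^ n / (Nat.factorial n : ℝ) := by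
    rw [Real.exp_eq_exp_ℝ, NormedSpace.exp_eq_tsum_div]
  rw [he]
  unfold besselI0
  apply Summable.tsum_le_tsum_of_inj (fun k => 2 * k)
    (fun a b h => by dsimp at h; omega)
  · intro c _; positivity
  · intro k
    have hfac : (Nat.factorial (2 * k) : ℝ) ≤ 4 ^ k * (Nat.factorial k : ℝ) ^ 2 := by
      exact_mod_cast factorial_two_mul_le k
    have hfpos : (0 : ℝ) < (Nat.factorial (2 * k) : ℝ) := by
      exact_mod_cast Nat.factorial_pos _
    have hz2 : (z / 2) ^ (2 * k) = z ^ (2 * k) / (4 ^ k * 1) := by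
      rw [div_pow, mul_one]
      congr 1
      rw [pow_mul]; norm_num
    rw [hz2, div_div, mul_one]
    apply div_le_div_of_nonneg_left (by positivity) hfpos
    calc (Nat.factorial (2 * k) : ℝ) ≤ 4 ^ k * (Nat.factorial k : ℝ) ^ 2 := hfac
      _ = 4 ^ k * (Nat.factorial k : ℝ) ^ 2 := rfl
  · have := gI0_summable ((z / 2) ^ 2)
    have heq : (fun k : ℕ => ((z / 2) ^ 2) ^ k / (Nat.factorial k : ℝ) ^ 2)
        = (fun k : ℕ => (z / 2) ^ (2 * k) / (Nat.factorial k : ℝ) ^ 2) := by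
      funext k; rw [pow_mul]
    rw [heq] at this
    exact this
  · exact Real.summable_pow_div_factorial z

lemma key_bound {R x y : ℝ} (hR : 0 < R) (hx : 0 ≤ x) (hxR : x ≤ R)
    (hy : 0 ≤ y) (hyR : y ≤ R) :
    besselI0 (2 * Real.sqrt (x * y)) * Real.exp (-x - y)
      ≤ Real.exp (-(1 / (4 * R)) * (y - x) ^ 2) := by
  set a := Real.sqrt x with ha
  set b := Real.sqrt y with hb
  have ha2 : a ^ 2 = x := Real.sq_sqrt hx
  have hb2 : b ^ 2 = y := Real.sq_sqrt hy
  have ha0 : 0 ≤ a := Real.sqrt_nonneg x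
  have hb0 : 0 ≤ b := Real.sqrt_nonneg y
  have haR : a ≤ Real.sqrt R := Real.sqrt_le_sqrt hxR
  have hbR : b ≤ Real.sqrt R := Real.sqrt_le_sqrt hyR
  have hR2 : (Real.sqrt R) ^ 2 = R := Real.sq_sqrt hR.le
  have hab : Real.sqrt (x * y) = a * b := Real.sqrt_mul hx y
  have hsum : (a + b) ^ 2 ≤ 4 * R := by nlinarith [Real.sqrt_nonneg R]
  have hprod : (0:ℝ) ≤ (a - b) ^ 2 * (4 * R - (a + b) ^ 2) :=
    mul_nonneg (sq_nonneg _) (by linarith)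
  have heq : (a - b) ^ 2 * (a + b) ^ 2 = (y - x) ^ 2 := by
    rw [← ha2, ← hb2]; ring
  have hkey : (y - x) ^ 2 ≤ (a - b) ^ 2 * (4 * R) := by nlinarith
  have h1 : besselI0 (2 * Real.sqrt (x * y)) ≤ Real.exp (2 * (a * b)) := by
    rw [hab]; exact besselI0_le_exp (by positivity)
  calc besselI0 (2 * Real.sqrt (x * y)) * Real.exp (-x - y)
      ≤ Real.exp (2 * (a * b)) * Real.exp (-x - y) := by
        apply mul_le_mul_of_nonneg_right h1 (Real.exp_nonneg _)
    _ = Real.exp (2 * (a * b) + (-x - y)) := (Real.exp_add _ _).symm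
    _ ≤ Real.exp (-(1 / (4 * R)) * (y - x) ^ 2) := by
        apply Real.exp_le_exp.2
        have hexpand : 2 * (a * b) + (-x - y) = -((a - b) ^ 2) := by
          rw [← ha2, ← hb2]; ring
        rw [hexpand]
        rw [neg_le, neg_mul, neg_neg]
        rw [div_mul_eq_mul_div, one_mul, div_le_iff₀ (by positivity)]
        linarith [hkey]

lemma inner_bound {R x : ℝ} (hR : 0 < R) (hx : 0 ≤ x) (hxR : x ≤ R) :
    ∫ y in (0:ℝ)..R, besselI0 (2 * Real.sqrt (x * y)) * Real.exp (-x - y)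
      ≤ 2 * Real.sqrt (π * R) := by
  have hb : (0 : ℝ) < 1 / (4 * R) := by positivity
  have hgint : Integrable (fun y : ℝ => Real.exp (-(1 / (4 * R)) * (y - x) ^ 2)) :=
    (integrable_exp_neg_mul_sq hb).comp_sub_right x
  have hcont : Continuous (fun y : ℝ =>
      besselI0 (2 * Real.sqrt (x * y)) * Real.exp (-x - y)) := by
    apply Continuous.mul
    · exact besselI0_continuous.comp (by fun_prop)
    · fun_prop
  calc ∫ y in (0:ℝ)..R, besselI0 (2 * Real.sqrt (x * y)) * Real.exp (-x - y)
      ≤ ∫ y in (0:ℝ)..R, Real.exp (-(1 / (4 * R)) * (y - x) ^ 2) := by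
        apply intervalIntegral.integral_mono_on hR.le
          (hcont.intervalIntegrable 0 R) hgint.intervalIntegrable
        intro y hy
        exact key_bound hR hx hxR hy.1 hy.2
    _ ≤ ∫ y : ℝ, Real.exp (-(1 / (4 * R)) * (y - x) ^ 2) := by
        rw [intervalIntegral.integral_of_le hR.le]
        apply setIntegral_le_integral hgint
        exact Eventually.of_forall fun y => Real.exp_nonneg _
    _ = Real.sqrt (π / (1 / (4 * R))) := by
        rw [MeasureTheory.integral_sub_right_eq_self
          (fun t : ℝ => Real.exp (-(1 / (4 * R)) * t ^ 2)) x]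
        exact integral_gaussian (1 / (4 * R))
    _ = 2 * Real.sqrt (π * R) := by
        have : π / (1 / (4 * R)) = 4 * (π * R) := by
          field_simp
        rw [this, show (4 : ℝ) * (π * R) = 2 ^ 2 * (π * R) by norm_num,
          Real.sqrt_mul (by positivity), Real.sqrt_sq (by norm_num)]

theorem stmt_11 :
    Filter.Tendsto
      (fun R : ℝ => (1 / R ^ 2) * ∫ x in (0:ℝ)..R, ∫ y in (0:ℝ)..R,
        besselI0 (2 * Real.sqrt (x * y)) * Real.exp (-x - y))
      Filter.atTop (nhds 0) := by
  apply squeeze_zero_norm' (a := fun R : ℝ => 2 * Real.sqrt π / Real.sqrt R)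
  · filter_upwards [eventually_ge_atTop (1 : ℝ)] with R hR1
    have hR : (0 : ℝ) < R := lt_of_lt_of_le one_pos hR1
    have hnorm : ‖∫ x in (0:ℝ)..R, ∫ y in (0:ℝ)..R,
        besselI0 (2 * Real.sqrt (x * y)) * Real.exp (-x - y)‖
        ≤ 2 * Real.sqrt (π * R) * |R - 0| := by
      apply intervalIntegral.norm_integral_le_of_norm_le_const
      intro x hxI
      rw [Set.uIoc_of_le hR.le] at hxI
      have hx0 : 0 ≤ x := hxI.1.le
      have hxR : x ≤ R := hxI.2
      have hnn : 0 ≤ ∫ y in (0:ℝ)..R,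
          besselI0 (2 * Real.sqrt (x * y)) * Real.exp (-x - y) := by
        apply intervalIntegral.integral_nonneg hR.le
        intro y _
        exact mul_nonneg (besselI0_nonneg _) (Real.exp_nonneg _)
      rw [Real.norm_eq_abs, abs_of_nonneg hnn]
      exact inner_bound hR hx0 hxR
    rw [norm_mul]
    have hRabs : |R - 0| = R := by rw [sub_zero, abs_of_pos hR]
    rw [hRabs] at hnorm
    have h1R : ‖(1 : ℝ) / R ^ 2‖ = 1 / R ^ 2 := by
      rw [Real.norm_eq_abs, abs_of_pos (by positivity)]
    rw [h1R]
    calc (1 / R ^ 2) * ‖∫ x in (0:ℝ)..R, ∫ y in (0:ℝ)..R,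
          besselI0 (2 * Real.sqrt (x * y)) * Real.exp (-x - y)‖
        ≤ (1 / R ^ 2) * (2 * Real.sqrt (π * R) * R) := by
          apply mul_le_mul_of_nonneg_left hnorm (by positivity)
      _ = 2 * Real.sqrt π / Real.sqrt R := by
          have hs : Real.sqrt R * Real.sqrt R = R := Real.mul_self_sqrt hR.le
          have hspos : (0 : ℝ) < Real.sqrt R := Real.sqrt_pos.2 hR
          rw [Real.sqrt_mul Real.pi_pos.le]
          calc 1 / R ^ 2 * (2 * (Real.sqrt π * Real.sqrt R) * R)
              = 1 / (Real.sqrt R * Real.sqrt R) ^ 2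
                * (2 * (Real.sqrt π * Real.sqrt R) * (Real.sqrt R * Real.sqrt R)) := by
                rw [hs]
            _ = 2 * Real.sqrt π / Real.sqrt R := by
                field_simp
  · apply Tendsto.div_atTop tendsto_const_nhds
    have : Real.sqrt = fun x : ℝ => x ^ (1/2 : ℝ) := funext Real.sqrt_eq_rpow
    rw [this]
    exact tendsto_rpow_atTop (by norm_num)
end

section
/- lim_{λ,μ→0+} λμ ∫₀^∞ ∫₀^∞ |x - y| I₀(2√(xy)) e^{-x-y} e^{-ω(λx + μy)} dy dx = 0 for every fixed ω > 0. -/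
open MeasureTheory Real Filter

section Aux
open Set


noncomputable def phiB (u : ℝ) : ℝ := ∑' k : ℕ, u ^ k / ((Nat.factorial k : ℝ)) ^ 2

lemma quad_aux (t a : ℝ) (ht : 0 < t) : a ≤ t * a ^ 2 + 1/(4*t) := by
  rw [← sub_nonneg]
  have e : t * a ^ 2 + 1/(4*t) - a = (2*t*a - 1)^2 / (4*t) := by field_simp; ring
  rw [e]; positivity

lemma abs_le_quad {t : ℝ} (z : ℝ) (ht : 0 < t) : |z| ≤ t * z ^ 2 + 1/(4*t) := by
  have := quad_aux t |z| ht
  rwa [sq_abs] at this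

lemma summable_phiB (u : ℝ) : Summable (fun k : ℕ => u ^ k / ((Nat.factorial k : ℝ)) ^ 2) := by
  apply Summable.of_norm
  refine (Real.summable_pow_div_factorial |u|).of_nonneg_of_le (fun k => norm_nonneg _) ?_
  intro k
  have h1 : (1:ℝ) ≤ (Nat.factorial k : ℝ) := by
    exact_mod_cast Nat.one_le_iff_ne_zero.2 k.factorial_ne_zero
  rw [norm_div, norm_pow, Real.norm_eq_abs, Real.norm_eq_abs,
    abs_of_nonneg (by nlinarith : (0:ℝ) ≤ ((Nat.factorial k : ℝ))^2)]
  exact div_le_div_of_nonneg_left (by positivity) (by linarith) (by nlinarith)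

lemma measurable_phiB : Measurable phiB := by
  apply measurable_of_tendsto_metrizable
    (f := fun n u => ∑ k ∈ Finset.range n, u ^ k / ((Nat.factorial k : ℝ)) ^ 2)
  · intro n; exact Finset.measurable_sum _ (fun k _ => by fun_prop)
  · rw [tendsto_pi_nhds]
    intro u
    exact (summable_phiB u).hasSum.tendsto_sum_nat

lemma besselI0_eq_s14 {x y : ℝ} (hx : 0 ≤ x) (hy : 0 ≤ y) :
    besselI0 (2 * Real.sqrt (x * y)) = phiB (x * y) := by
  unfold besselI0 phiB
  congr 1; ext k
  congr 1
  rw [mul_div_cancel_left₀ _ (two_ne_zero), pow_mul, Real.sq_sqrt (mul_nonneg hx hy)]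

lemma phiB_nonneg {u : ℝ} (hu : 0 ≤ u) : 0 ≤ phiB u :=
  tsum_nonneg fun k => by positivity

lemma integrableOn_mom (n : ℕ) {γ : ℝ} (hγ : 0 < γ) :
    IntegrableOn (fun x : ℝ => x ^ n * Real.exp (-γ * x)) (Ioi 0) := by
  have h := integrableOn_rpow_mul_exp_neg_mul_rpow (s := (n : ℝ)) (p := 1)
    (lt_of_lt_of_le neg_one_lt_zero (Nat.cast_nonneg n)) one_pos hγ
  refine h.congr_fun (fun x hx => ?_) measurableSet_Ioi
  simp only [Real.rpow_one, Real.rpow_natCast]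

lemma integral_mom (n : ℕ) {γ : ℝ} (hγ : 0 < γ) :
    ∫ x in Ioi 0, x ^ n * Real.exp (-γ * x) = (n.factorial : ℝ) / γ ^ (n + 1) := by
  have h := integral_rpow_mul_exp_neg_mul_Ioi (a := (n : ℝ) + 1) (by positivity) hγ
  rw [show ((n : ℝ) + 1 - 1) = (n : ℝ) by ring] at h
  have e : ∫ x in Ioi 0, x ^ n * Real.exp (-γ * x)
      = ∫ t in Ioi 0, t ^ (n : ℝ) * Real.exp (-(γ * t)) := by
    refine setIntegral_congr_fun measurableSet_Ioi (fun x hx => ?_)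
    rw [Real.rpow_natCast, neg_mul]
  rw [e, h, Real.Gamma_nat_eq_factorial,
    show ((n:ℝ)+1) = ((n+1:ℕ):ℝ) by push_cast; ring, Real.rpow_natCast,
    div_pow, one_pow, div_mul_eq_mul_div, one_mul]


noncomputable def mom (γ : ℝ) (j : ℕ) : ℝ := (j.factorial : ℝ) / γ ^ (j + 1)

noncomputable def wf (α β t c : ℝ) (k : ℕ) (x y : ℝ) : ℝ :=
  (t * (x - y) ^ 2 + c) * ((x * y) ^ k / ((k.factorial : ℝ)) ^ 2) *
    (Real.exp (-α * x) * Real.exp (-β * y))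

noncomputable def IV (α β t c : ℝ) (k : ℕ) (x : ℝ) : ℝ :=
  (x ^ k * Real.exp (-α * x) / ((k.factorial : ℝ)) ^ 2) *
    ((t * x ^ 2 + c) * mom β k - 2 * t * x * mom β (k + 1) + t * mom β (k + 2))

noncomputable def Bq (α β t c : ℝ) (k : ℕ) : ℝ :=
  (1 / ((k.factorial : ℝ)) ^ 2) * (t * mom β k * mom α (k + 2)
    - 2 * t * mom β (k + 1) * mom α (k + 1) + (t * mom β (k + 2) + c * mom β k) * mom α k)

lemma wf_nonneg {α β t c : ℝ} (ht : 0 ≤ t) (hc : 0 ≤ c) (k : ℕ) {x y : ℝ}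
    (hx : 0 ≤ x) (hy : 0 ≤ y) : 0 ≤ wf α β t c k x y := by
  unfold wf
  have h1 : 0 ≤ x * y := mul_nonneg hx hy
  positivity

lemma wf_decomp (α β t c : ℝ) (k : ℕ) (x y : ℝ) :
    wf α β t c k x y = (x ^ k * Real.exp (-α * x) / ((k.factorial : ℝ)) ^ 2) *
      ((t * x ^ 2 + c) * (y ^ k * Real.exp (-β * y))
        + (-(2 * t * x)) * (y ^ (k + 1) * Real.exp (-β * y))
        + t * (y ^ (k + 2) * Real.exp (-β * y))) := by
  unfold wf; ring

lemma integrable_inner {β : ℝ} (α t c : ℝ) (hβ : 0 < β) (k : ℕ) (x : ℝ) :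
    IntegrableOn (fun y => wf α β t c k x y) (Ioi 0) := by
  have : (fun y => wf α β t c k x y) = fun y =>
      (x ^ k * Real.exp (-α * x) / ((k.factorial : ℝ)) ^ 2) *
      ((t * x ^ 2 + c) * (y ^ k * Real.exp (-β * y))
        + (-(2 * t * x)) * (y ^ (k + 1) * Real.exp (-β * y))
        + t * (y ^ (k + 2) * Real.exp (-β * y))) := funext (wf_decomp α β t c k x)
  rw [this]
  exact ((((integrableOn_mom k hβ).const_mul _).add
    ((integrableOn_mom (k+1) hβ).const_mul _)).add
    ((integrableOn_mom (k+2) hβ).const_mul _)).const_mul _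

lemma integral_wf {β : ℝ} (α t c : ℝ) (hβ : 0 < β) (k : ℕ) (x : ℝ) :
    ∫ y in Ioi 0, wf α β t c k x y = IV α β t c k x := by
  simp_rw [wf_decomp α β t c k x]
  have hI1 : Integrable (fun y : ℝ => (t * x ^ 2 + c) * (y ^ k * Real.exp (-β * y)))
      (volume.restrict (Ioi 0)) := (integrableOn_mom k hβ).const_mul _
  have hI2 : Integrable (fun y : ℝ => (-(2 * t * x)) * (y ^ (k+1) * Real.exp (-β * y)))
      (volume.restrict (Ioi 0)) := (integrableOn_mom (k+1) hβ).const_mul _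
  have hI3 : Integrable (fun y : ℝ => t * (y ^ (k+2) * Real.exp (-β * y)))
      (volume.restrict (Ioi 0)) := (integrableOn_mom (k+2) hβ).const_mul _
  have hI12 : Integrable (fun y : ℝ => (t * x ^ 2 + c) * (y ^ k * Real.exp (-β * y))
      + (-(2 * t * x)) * (y ^ (k+1) * Real.exp (-β * y))) (volume.restrict (Ioi 0)) := hI1.add hI2
  rw [integral_const_mul, integral_add hI12 hI3, integral_add hI1 hI2,
    integral_const_mul, integral_const_mul, integral_const_mul,
    integral_mom k hβ, integral_mom (k+1) hβ, integral_mom (k+2) hβ]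
  unfold IV mom; ring

lemma IV_nonneg {α β t c : ℝ} (hβ : 0 < β) (ht : 0 ≤ t) (hc : 0 ≤ c) (k : ℕ) {x : ℝ}
    (hx : 0 ≤ x) : 0 ≤ IV α β t c k x := by
  rw [← integral_wf α t c hβ k x]
  exact setIntegral_nonneg measurableSet_Ioi fun y hy => wf_nonneg ht hc k hx (le_of_lt hy)

lemma IV_decomp (α β t c : ℝ) (k : ℕ) (x : ℝ) :
    IV α β t c k x = (1 / ((k.factorial : ℝ)) ^ 2) *
      ((t * mom β k) * (x ^ (k + 2) * Real.exp (-α * x))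
        + (-(2 * t * mom β (k + 1))) * (x ^ (k + 1) * Real.exp (-α * x))
        + (t * mom β (k + 2) + c * mom β k) * (x ^ k * Real.exp (-α * x))) := by
  unfold IV; ring

lemma integrable_IV {α : ℝ} (β t c : ℝ) (hα : 0 < α) (k : ℕ) :
    IntegrableOn (fun x => IV α β t c k x) (Ioi 0) := by
  have : (fun x => IV α β t c k x) = fun x => (1 / ((k.factorial : ℝ)) ^ 2) *
      ((t * mom β k) * (x ^ (k + 2) * Real.exp (-α * x))
        + (-(2 * t * mom β (k + 1))) * (x ^ (k + 1) * Real.exp (-α * x))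
        + (t * mom β (k + 2) + c * mom β k) * (x ^ k * Real.exp (-α * x))) :=
    funext (IV_decomp α β t c k)
  rw [this]
  exact ((((integrableOn_mom (k+2) hα).const_mul _).add
    ((integrableOn_mom (k+1) hα).const_mul _)).add
    ((integrableOn_mom k hα).const_mul _)).const_mul _

lemma integral_IV {α : ℝ} (β t c : ℝ) (hα : 0 < α) (k : ℕ) :
    ∫ x in Ioi 0, IV α β t c k x = Bq α β t c k := by
  simp_rw [IV_decomp α β t c k]
  have hI1 : Integrable (fun x : ℝ => (t * mom β k) * (x ^ (k+2) * Real.exp (-α * x)))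
      (volume.restrict (Ioi 0)) := (integrableOn_mom (k+2) hα).const_mul _
  have hI2 : Integrable (fun x : ℝ => (-(2 * t * mom β (k+1))) * (x ^ (k+1) * Real.exp (-α * x)))
      (volume.restrict (Ioi 0)) := (integrableOn_mom (k+1) hα).const_mul _
  have hI3 : Integrable (fun x : ℝ => (t * mom β (k+2) + c * mom β k) * (x ^ k * Real.exp (-α * x)))
      (volume.restrict (Ioi 0)) := (integrableOn_mom k hα).const_mul _
  have hI12 : Integrable (fun x : ℝ => (t * mom β k) * (x ^ (k+2) * Real.exp (-α * x))
      + (-(2 * t * mom β (k+1))) * (x ^ (k+1) * Real.exp (-α * x))) (volume.restrict (Ioi 0)) := hI1.add hI2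
  rw [integral_const_mul, integral_add hI12 hI3, integral_add hI1 hI2,
    integral_const_mul, integral_const_mul, integral_const_mul,
    integral_mom k hα, integral_mom (k+1) hα, integral_mom (k+2) hα]
  unfold Bq mom; ring

lemma Bq_eq {α β : ℝ} (t c : ℝ) (hα : 0 < α) (hβ : 0 < β) (k : ℕ) :
    Bq α β t c k = (t * ((k:ℝ)+1) * ((k:ℝ)+2) * (1/α)^2
      - 2 * t * ((k:ℝ)+1)^2 * ((1/α) * (1/β)) + t * ((k:ℝ)+1) * ((k:ℝ)+2) * (1/β)^2 + c)
      * (1/(α*β))^(k+1) := by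
  have hk : ((k.factorial : ℝ)) ≠ 0 := by
    exact_mod_cast k.factorial_ne_zero
  unfold Bq mom
  have f1 : ((k+1).factorial : ℝ) = ((k:ℝ)+1) * (k.factorial : ℝ) := by
    rw [Nat.factorial_succ]; push_cast; ring
  have f2 : ((k+2).factorial : ℝ) = ((k:ℝ)+2) * (((k:ℝ)+1) * (k.factorial : ℝ)) := by
    rw [show k+2 = (k+1)+1 from rfl, Nat.factorial_succ, ← f1]; push_cast; ring
  rw [f1, f2]
  have hpα : α ^ (k + 2 + 1) = α ^ (k+1) * α ^ 2 := by ring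
  have hpβ : β ^ (k + 2 + 1) = β ^ (k+1) * β ^ 2 := by ring
  have hpα1 : α ^ (k + 1 + 1) = α ^ (k+1) * α := by ring
  have hpβ1 : β ^ (k + 1 + 1) = β ^ (k+1) * β := by ring
  rw [hpα, hpβ, hpα1, hpβ1, one_div_pow (α*β), mul_pow]
  field_simp
  ring

lemma Bq_le {α β : ℝ} {t c : ℝ} (hα : 1 < α) (hβ : 1 < β) (ht : 0 ≤ t) (k : ℕ) :
    Bq α β t c k ≤ (t * ((k:ℝ)+1)^2 * (1/α - 1/β)^2 + 2 * t * ((k:ℝ)+1) + c)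
      * (1/(α*β))^(k+1) := by
  have hα0 : (0:ℝ) < α := lt_trans one_pos hα
  have hβ0 : (0:ℝ) < β := lt_trans one_pos hβ
  rw [Bq_eq t c hα0 hβ0 k]
  apply mul_le_mul_of_nonneg_right ?_ (by positivity)
  have hr1 : 1/α ≤ 1 := by rw [div_le_one hα0]; linarith
  have hs1 : 1/β ≤ 1 := by rw [div_le_one hβ0]; linarith
  have hr0 : 0 < 1/α := by positivity
  have hs0 : 0 < 1/β := by positivity
  have h2 : (1/α)^2 ≤ 1 := by nlinarith
  have h3 : (1/β)^2 ≤ 1 := by nlinarith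
  have hK0 : (0:ℝ) ≤ (k:ℝ)+1 := by positivity
  have key : 0 ≤ t*((k:ℝ)+1)*(2 - (1/α)^2 - (1/β)^2) :=
    mul_nonneg (mul_nonneg ht hK0) (by linarith)
  nlinarith [key]


section Geom
variable {x q : ℝ}

lemma summable_geom_succ (h0 : 0 ≤ x) (h1 : x < 1) : Summable (fun k : ℕ => x ^ (k+1)) :=
  ((summable_geometric_of_lt_one h0 h1).mul_right x).congr fun k => (pow_succ x k).symm

lemma tsum_geom_succ (h0 : 0 ≤ x) (h1 : x < 1) : ∑' k : ℕ, x ^ (k+1) = x / (1-x) := by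
  calc ∑' k : ℕ, x ^ (k+1) = ∑' k : ℕ, x ^ k * x := by simp [pow_succ]
  _ = (1-x)⁻¹ * x := by rw [tsum_mul_right, tsum_geometric_of_lt_one h0 h1]
  _ = x / (1-x) := by rw [mul_comm, ← div_eq_mul_inv]

lemma summable_mul_geom (h0 : 0 ≤ x) (h1 : x < 1) : Summable (fun n : ℕ => (n:ℝ) * x ^ n) :=
  (summable_pow_mul_geometric_of_norm_lt_one 1
    (by rwa [Real.norm_eq_abs, abs_of_nonneg h0])).congr fun n => by rw [pow_one]

lemma summable_succ_mul_geom (h0 : 0 ≤ x) (h1 : x < 1) :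
    Summable (fun k : ℕ => ((k:ℝ)+1) * x ^ (k+1)) :=
  ((summable_nat_add_iff 1).2 (summable_mul_geom h0 h1)).congr fun k => by push_cast; ring_nf

lemma tsum_succ_mul_geom (h0 : 0 ≤ x) (h1 : x < 1) :
    ∑' k : ℕ, ((k:ℝ)+1) * x ^ (k+1) = x / (1-x)^2 := by
  have h := Summable.tsum_eq_zero_add (summable_mul_geom h0 h1)
  rw [tsum_coe_mul_geometric_of_norm_lt_one
    (by rwa [Real.norm_eq_abs, abs_of_nonneg h0])] at h
  simp only [Nat.cast_zero, zero_mul, pow_zero, zero_add] at h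
  rw [h]
  apply tsum_congr; intro k; push_cast; ring

lemma succ_mul_geom_le (h0 : 0 ≤ x) (h1 : x < 1) (k : ℕ) :
    ((k:ℝ)+1) * x ^ (k+1) ≤ x / (1-x)^2 := by
  rw [← tsum_succ_mul_geom h0 h1]
  exact Summable.le_tsum (summable_succ_mul_geom h0 h1) k fun j _ => by positivity

lemma summable_sq_mul_geom (h0 : 0 ≤ q) (h1 : q < 1) :
    Summable (fun k : ℕ => ((k:ℝ)+1)^2 * q ^ (k+1)) := by
  have := (summable_nat_add_iff 1).2 (summable_pow_mul_geometric_of_norm_lt_one 2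
    (by rwa [Real.norm_eq_abs, abs_of_nonneg h0]) : Summable (fun n : ℕ => ((n:ℝ)^2 * q^n)))
  exact this.congr fun k => by push_cast; ring_nf

lemma tsum_sq_mul_geom_le (h0 : 0 ≤ q) (h1 : q < 1) :
    ∑' k : ℕ, ((k:ℝ)+1)^2 * q ^ (k+1) ≤ 16 / (1-q)^4 := by
  set x := Real.sqrt q with hxdef
  have hx0 : 0 ≤ x := Real.sqrt_nonneg q
  have hxq : x^2 = q := Real.sq_sqrt h0
  have hx1 : x < 1 := by
    rw [hxdef, show (1:ℝ) = Real.sqrt 1 from (Real.sqrt_one).symm]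
    exact Real.sqrt_lt_sqrt h0 h1
  have key : ∀ k : ℕ, ((k:ℝ)+1)^2 * q ^ (k+1) ≤ (x/(1-x)^2) * (((k:ℝ)+1) * x ^ (k+1)) := by
    intro k
    have he : ((k:ℝ)+1)^2 * q ^ (k+1) = (((k:ℝ)+1) * x ^ (k+1)) * (((k:ℝ)+1) * x ^ (k+1)) := by
      rw [← hxq, ← pow_mul, mul_comm 2 (k+1), pow_mul]; ring
    rw [he]
    exact mul_le_mul_of_nonneg_right (succ_mul_geom_le hx0 hx1 k) (by positivity)
  have hsum : ∑' k : ℕ, ((k:ℝ)+1)^2 * q ^ (k+1)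
      ≤ ∑' k : ℕ, (x/(1-x)^2) * (((k:ℝ)+1) * x ^ (k+1)) :=
    Summable.tsum_le_tsum key (summable_sq_mul_geom h0 h1)
      ((summable_succ_mul_geom hx0 hx1).mul_left _)
  rw [tsum_mul_left, tsum_succ_mul_geom hx0 hx1] at hsum
  refine hsum.trans ?_
  have base : 1 - q ≤ 2 * (1-x) := by nlinarith
  have h1q : (0:ℝ) ≤ 1 - q := by linarith
  have hb : (1-q)^4 ≤ 16*(1-x)^4 := by
    calc (1-q)^4 ≤ (2*(1-x))^4 := pow_le_pow_left₀ h1q base 4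
    _ = 16*(1-x)^4 := by ring
  have h1x : (0:ℝ) < 1 - x := by linarith
  have h1q' : (0:ℝ) < 1 - q := by linarith
  have hxx : x * x ≤ 1 := by nlinarith
  rw [div_mul_div_comm, div_le_div_iff₀ (by positivity) (by positivity)]
  nlinarith [mul_le_mul_of_nonneg_right hxx (pow_nonneg h1q 4), pow_nonneg h1x.le 4,
    mul_le_mul_of_nonneg_left hb (by norm_num : (0:ℝ) ≤ 1)]

end Geom

lemma sum_bd {q e2 : ℝ} (hq0 : 0 < q) (hq1 : q < 1) (he2 : 0 ≤ e2) (he2' : e2 ≤ (1-q)^2) :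
    Summable (fun k : ℕ => ((Real.sqrt (1-q)/4) * ((k:ℝ)+1)^2 * e2
        + 2*(Real.sqrt (1-q)/4)*((k:ℝ)+1) + 1/Real.sqrt (1-q)) * q^(k+1)) ∧
    ∑' k : ℕ, ((Real.sqrt (1-q)/4) * ((k:ℝ)+1)^2 * e2
        + 2*(Real.sqrt (1-q)/4)*((k:ℝ)+1) + 1/Real.sqrt (1-q)) * q^(k+1)
      ≤ 6/((1-q)*Real.sqrt (1-q)) := by
  have hδ0 : (0:ℝ) < 1 - q := by linarith
  set s : ℝ := Real.sqrt (1-q) with hsdef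
  have hs0 : 0 < s := Real.sqrt_pos.2 hδ0
  have hs2 : s^2 = 1-q := Real.sq_sqrt hδ0.le
  have bd_eq : ∀ k : ℕ, ((s/4) * ((k:ℝ)+1)^2 * e2 + 2*(s/4)*((k:ℝ)+1) + 1/s) * q^(k+1)
      = (s/4*e2) * (((k:ℝ)+1)^2 * q^(k+1)) + (s/2) * (((k:ℝ)+1) * q^(k+1))
        + (1/s) * q^(k+1) := fun k => by ring
  have hS2s := (summable_sq_mul_geom hq0.le hq1).mul_left (s/4*e2)
  have hS1s := (summable_succ_mul_geom hq0.le hq1).mul_left (s/2)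
  have hS0s := (summable_geom_succ hq0.le hq1).mul_left (1/s)
  have hsummable : Summable (fun k : ℕ => ((s/4) * ((k:ℝ)+1)^2 * e2
      + 2*(s/4)*((k:ℝ)+1) + 1/s) * q^(k+1)) :=
    (((hS2s.add hS1s).add hS0s).congr (fun k => (bd_eq k).symm))
  refine ⟨hsummable, ?_⟩
  rw [tsum_congr bd_eq, Summable.tsum_add (hS2s.add hS1s) hS0s, Summable.tsum_add hS2s hS1s,
    tsum_mul_left, tsum_mul_left, tsum_mul_left,
    tsum_succ_mul_geom hq0.le hq1, tsum_geom_succ hq0.le hq1]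
  have hS2 : ∑' k : ℕ, ((k:ℝ)+1)^2 * q^(k+1) ≤ 16/(1-q)^4 := tsum_sq_mul_geom_le hq0.le hq1
  have hS2nn : (0:ℝ) ≤ ∑' k : ℕ, ((k:ℝ)+1)^2 * q^(k+1) :=
    tsum_nonneg fun k => by positivity
  have T1 : (s/4*e2) * (∑' k : ℕ, ((k:ℝ)+1)^2 * q^(k+1)) ≤ (s/4*(1-q)^2) * (16/(1-q)^4) := by
    apply mul_le_mul (by gcongr) hS2 hS2nn (by positivity)
  have T2 : (s/2) * (q/(1-q)^2) ≤ (s/2) * (1/(1-q)^2) := by gcongr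
  have T3 : (1/s) * (q/(1-q)) ≤ (1/s) * (1/(1-q)) := by gcongr
  have e1 : (s/4*(1-q)^2) * (16/(1-q)^4) = 4/((1-q)*s) := by
    rw [← hs2]; field_simp; ring
  have e2' : (s/2) * (1/(1-q)^2) = 1/(2*((1-q)*s)) := by
    rw [← hs2]; field_simp
  have e3 : (1/s) * (1/(1-q)) = 1/((1-q)*s) := by
    rw [div_mul_div_comm, one_mul, mul_comm]
  have efin : (4:ℝ)/((1-q)*s) + 1/(2*((1-q)*s)) + 1/((1-q)*s) ≤ 6/((1-q)*s) := by
    rw [← hs2]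
    rw [div_add_div _ _ (by positivity) (by positivity),
      div_add_div _ _ (by positivity) (by positivity),
      div_le_div_iff₀ (by positivity) (by positivity)]
    nlinarith [pow_pos hs0 3, pow_pos hs0 6, mul_pos (mul_pos hs0 hs0) hs0]
  linarith [e1 ▸ T1, e2' ▸ T2, e3 ▸ T3]


lemma key {α β q δ s t c E2 : ℝ} (hα : 1 < α) (hβ : 1 < β)
    (hq : q = 1/(α*β)) (hδ : δ = 1 - q) (hs : s = Real.sqrt δ)
    (ht : t = s/4) (hc : c = 1/s) (hE2 : E2 = (1/α - 1/β)^2) :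
    (∫ x in Ioi 0, ∫ y in Ioi 0, |x - y| * phiB (x*y) * (Real.exp (-α*x) * Real.exp (-β*y)))
      ≤ 6 / (δ * s) := by
  have hα0 : (0:ℝ) < α := one_pos.trans hα
  have hβ0 : (0:ℝ) < β := one_pos.trans hβ
  have hαβ1 : 1 < α*β := by nlinarith
  have hq0 : 0 < q := by rw [hq]; positivity
  have hq1 : q < 1 := by rw [hq, div_lt_one (by positivity)]; exact hαβ1
  have hδ0 : 0 < δ := by rw [hδ]; linarith
  have hs0 : 0 < s := by rw [hs]; exact Real.sqrt_pos.2 hδ0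
  have hs2 : s^2 = δ := by rw [hs]; exact Real.sq_sqrt hδ0.le
  have ht0 : 0 < t := by rw [ht]; positivity
  have hc0 : 0 < c := by rw [hc]; positivity
  have hc41 : c = 1/(4*t) := by rw [hc, ht]; field_simp
  have hE2nn : 0 ≤ E2 := hE2 ▸ sq_nonneg _
  have hE2le : E2 ≤ (1-q)^2 := by
    rw [hE2, hq]
    have h1 : (1/α - 1/β) = (β-α)/(α*β) := by field_simp
    have h2 : (1:ℝ) - 1/(α*β) = (α*β-1)/(α*β) := by field_simp
    rw [h1, h2, div_pow, div_pow]
    refine (div_le_div_iff_of_pos_right (pow_pos (mul_pos hα0 hβ0) 2)).2 ?_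
    nlinarith [mul_nonneg (mul_nonneg (by linarith : (0:ℝ) ≤ β-1) (by linarith : (0:ℝ) ≤ α+1))
        (mul_nonneg (by linarith : (0:ℝ) ≤ α-1) (by linarith : (0:ℝ) ≤ β+1))]
  obtain ⟨hsummable_bd, htsum_bd⟩ := sum_bd hq0 hq1 hE2nn hE2le
  -- pointwise bound on (0,∞)²
  have hpt : ∀ x ∈ Ioi (0:ℝ), ∀ y ∈ Ioi (0:ℝ),
      ENNReal.ofReal (|x - y| * phiB (x*y) * (Real.exp (-α*x) * Real.exp (-β*y)))
        ≤ ∑' k : ℕ, ENNReal.ofReal (wf α β t c k x y) := by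
    intro x hx y hy
    have hx0 : (0:ℝ) < x := hx
    have hy0 : (0:ℝ) < y := hy
    have hxy0 : 0 ≤ x*y := by positivity
    have habs : |x - y| ≤ t*(x-y)^2 + c := by rw [hc41]; exact abs_le_quad _ ht0
    have hgle : |x - y| * phiB (x*y) * (Real.exp (-α*x) * Real.exp (-β*y))
        ≤ (t*(x-y)^2 + c) * phiB (x*y) * (Real.exp (-α*x) * Real.exp (-β*y)) := by
      have h1 := mul_le_mul_of_nonneg_right habs (phiB_nonneg hxy0)
      exact mul_le_mul_of_nonneg_right h1 (by positivity)
    have heq : (t*(x-y)^2 + c) * phiB (x*y) * (Real.exp (-α*x) * Real.exp (-β*y))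
        = ∑' k : ℕ, wf α β t c k x y := by
      have hphi : phiB (x*y) = ∑' k : ℕ, (x*y)^k / ((Nat.factorial k : ℝ))^2 := rfl
      rw [show (t*(x-y)^2 + c) * phiB (x*y) * (Real.exp (-α*x) * Real.exp (-β*y))
          = ((t*(x-y)^2 + c) * (Real.exp (-α*x) * Real.exp (-β*y))) * phiB (x*y) by ring,
        hphi, ← tsum_mul_left]
      apply tsum_congr; intro k; unfold wf; ring
    have hsumm : Summable fun k : ℕ => wf α β t c k x y := by
      have hfe : (fun k : ℕ => wf α β t c k x y)
          = fun k : ℕ => ((t*(x-y)^2 + c) * (Real.exp (-α*x) * Real.exp (-β*y)))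
            * ((x*y)^k / ((Nat.factorial k : ℝ))^2) := funext fun k => by unfold wf; ring
      rw [hfe]
      exact (summable_phiB (x*y)).mul_left _
    calc ENNReal.ofReal (|x - y| * phiB (x*y) * (Real.exp (-α*x) * Real.exp (-β*y)))
        ≤ ENNReal.ofReal (∑' k : ℕ, wf α β t c k x y) :=
          ENNReal.ofReal_le_ofReal (hgle.trans_eq heq)
      _ = ∑' k : ℕ, ENNReal.ofReal (wf α β t c k x y) :=
          ENNReal.ofReal_tsum_of_nonneg
            (fun k => wf_nonneg ht0.le hc0.le k hx0.le hy0.le) hsumm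
  -- measurability
  have hm_wf : ∀ (k : ℕ) (x : ℝ), Measurable fun y => wf α β t c k x y := by
    intro k x; unfold wf; fun_prop
  have hm_IV : ∀ k : ℕ, Measurable fun x => IV α β t c k x := by
    intro k; unfold IV mom; fun_prop
  have hm_gx : ∀ x : ℝ, Measurable fun y =>
      |x - y| * phiB (x*y) * (Real.exp (-α*x) * Real.exp (-β*y)) := by
    intro x
    exact (((measurable_const.sub measurable_id).abs).mul
      (measurable_phiB.comp (measurable_id.const_mul x))).mul
      (measurable_const.mul ((measurable_id.const_mul (-β)).exp))
  have hmg : Measurable (Function.uncurry fun x y : ℝ =>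
      ENNReal.ofReal (|x - y| * phiB (x*y) * (Real.exp (-α*x) * Real.exp (-β*y)))) := by
    apply Measurable.ennreal_ofReal
    exact (((measurable_fst.sub measurable_snd).abs).mul
      (measurable_phiB.comp (measurable_fst.mul measurable_snd))).mul
      (((measurable_fst.const_mul (-α)).exp).mul ((measurable_snd.const_mul (-β)).exp))
  have hGm : Measurable fun x => ∫⁻ y in Ioi 0,
      ENNReal.ofReal (|x - y| * phiB (x*y) * (Real.exp (-α*x) * Real.exp (-β*y))) :=
    Measurable.lintegral_prod_right hmg
  -- step 1 : inner lintegral bound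
  have step1 : ∀ x ∈ Ioi (0:ℝ),
      ∫⁻ y in Ioi 0, ENNReal.ofReal (|x - y| * phiB (x*y) * (Real.exp (-α*x) * Real.exp (-β*y)))
        ≤ ∑' k : ℕ, ENNReal.ofReal (IV α β t c k x) := by
    intro x hx
    have h1 : ∫⁻ y in Ioi 0, ENNReal.ofReal (|x - y| * phiB (x*y) * (Real.exp (-α*x) * Real.exp (-β*y)))
        ≤ ∫⁻ y in Ioi 0, ∑' k : ℕ, ENNReal.ofReal (wf α β t c k x y) :=
      lintegral_mono_ae ((ae_restrict_iff' measurableSet_Ioi).2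
        (Filter.Eventually.of_forall fun y hy => hpt x hx y hy))
    have h2 : ∫⁻ y in Ioi 0, ∑' k : ℕ, ENNReal.ofReal (wf α β t c k x y)
        = ∑' k : ℕ, ∫⁻ y in Ioi 0, ENNReal.ofReal (wf α β t c k x y) :=
      lintegral_tsum fun k => ((hm_wf k x).ennreal_ofReal).aemeasurable
    have h3 : ∀ k : ℕ, ∫⁻ y in Ioi 0, ENNReal.ofReal (wf α β t c k x y)
        = ENNReal.ofReal (IV α β t c k x) := by
      intro k
      rw [← integral_wf α t c hβ0 k x]
      exact (ofReal_integral_eq_lintegral_ofReal (integrable_inner α t c hβ0 k x)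
        ((ae_restrict_iff' measurableSet_Ioi).2 (Filter.Eventually.of_forall
          fun y hy => wf_nonneg ht0.le hc0.le k (le_of_lt hx) (le_of_lt hy)))).symm
    refine h1.trans ?_
    rw [h2]
    exact le_of_eq (tsum_congr h3)
  -- step 2 : full lintegral bound
  have step2 : ∫⁻ x in Ioi 0, ∫⁻ y in Ioi 0,
      ENNReal.ofReal (|x - y| * phiB (x*y) * (Real.exp (-α*x) * Real.exp (-β*y)))
        ≤ ENNReal.ofReal (6/(δ*s)) := by
    have hform : ∀ k : ℕ, (t * ((k:ℝ)+1)^2 * (1/α - 1/β)^2 + 2 * t * ((k:ℝ)+1) + c)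
        * (1/(α*β))^(k+1)
        = ((Real.sqrt (1-q)/4) * ((k:ℝ)+1)^2 * E2
            + 2*(Real.sqrt (1-q)/4)*((k:ℝ)+1) + 1/Real.sqrt (1-q)) * q^(k+1) := by
      intro k
      rw [hE2, ← hδ, ← hs, ← ht, ← hc, ← hq]
    calc ∫⁻ x in Ioi 0, ∫⁻ y in Ioi 0,
        ENNReal.ofReal (|x - y| * phiB (x*y) * (Real.exp (-α*x) * Real.exp (-β*y)))
        ≤ ∫⁻ x in Ioi 0, ∑' k : ℕ, ENNReal.ofReal (IV α β t c k x) :=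
          lintegral_mono_ae ((ae_restrict_iff' measurableSet_Ioi).2
            (Filter.Eventually.of_forall step1))
      _ = ∑' k : ℕ, ∫⁻ x in Ioi 0, ENNReal.ofReal (IV α β t c k x) :=
          lintegral_tsum fun k => ((hm_IV k).ennreal_ofReal).aemeasurable
      _ = ∑' k : ℕ, ENNReal.ofReal (Bq α β t c k) := by
          refine tsum_congr fun k => ?_
          rw [← integral_IV β t c hα0 k]
          exact (ofReal_integral_eq_lintegral_ofReal (integrable_IV β t c hα0 k)
            ((ae_restrict_iff' measurableSet_Ioi).2 (Filter.Eventually.of_forall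
              fun x hx => IV_nonneg hβ0 ht0.le hc0.le k (le_of_lt hx)))).symm
      _ ≤ ∑' k : ℕ, ENNReal.ofReal (((Real.sqrt (1-q)/4) * ((k:ℝ)+1)^2 * E2
            + 2*(Real.sqrt (1-q)/4)*((k:ℝ)+1) + 1/Real.sqrt (1-q)) * q^(k+1)) :=
          ENNReal.tsum_le_tsum fun k => ENNReal.ofReal_le_ofReal
            ((Bq_le hα hβ ht0.le k).trans_eq (hform k))
      _ = ENNReal.ofReal (∑' k : ℕ, ((Real.sqrt (1-q)/4) * ((k:ℝ)+1)^2 * E2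
            + 2*(Real.sqrt (1-q)/4)*((k:ℝ)+1) + 1/Real.sqrt (1-q)) * q^(k+1)) := by
          refine (ENNReal.ofReal_tsum_of_nonneg (fun k => ?_) hsummable_bd).symm
          have h1 : 0 < Real.sqrt (1-q) := by rw [← hδ]; rw [← hs]; exact hs0
          have hk0 : (0:ℝ) ≤ (k:ℝ)+1 := by positivity
          have := mul_nonneg (mul_nonneg (by positivity : (0:ℝ) ≤ Real.sqrt (1-q)/4)
            (sq_nonneg ((k:ℝ)+1))) hE2nn
          refine mul_nonneg (by positivity) (by positivity)
      _ ≤ ENNReal.ofReal (6/((1-q)*Real.sqrt (1-q))) := ENNReal.ofReal_le_ofReal htsum_bd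
      _ = ENNReal.ofReal (6/(δ*s)) := by rw [← hδ, ← hs]
  -- real side
  have hGnn : ∀ x ∈ Ioi (0:ℝ), ∀ y ∈ Ioi (0:ℝ),
      0 ≤ |x - y| * phiB (x*y) * (Real.exp (-α*x) * Real.exp (-β*y)) := by
    intro x hx y hy
    have hx0 : (0:ℝ) < x := hx
    have hy0 : (0:ℝ) < y := hy
    have := phiB_nonneg (show 0 ≤ x*y by positivity)
    positivity
  have hinner : ∀ x ∈ Ioi (0:ℝ),
      (fun x => ∫ y in Ioi 0, |x - y| * phiB (x*y) * (Real.exp (-α*x) * Real.exp (-β*y))) x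
        = (fun x => (∫⁻ y in Ioi 0, ENNReal.ofReal
            (|x - y| * phiB (x*y) * (Real.exp (-α*x) * Real.exp (-β*y)))).toReal) x := by
    intro x hx
    exact integral_eq_lintegral_of_nonneg_ae
      ((ae_restrict_iff' measurableSet_Ioi).2 (Filter.Eventually.of_forall fun y hy => hGnn x hx y hy))
      ((hm_gx x).aestronglyMeasurable)
  calc (∫ x in Ioi 0, ∫ y in Ioi 0, |x - y| * phiB (x*y) * (Real.exp (-α*x) * Real.exp (-β*y)))
      = ∫ x in Ioi 0, (∫⁻ y in Ioi 0, ENNReal.ofReal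
          (|x - y| * phiB (x*y) * (Real.exp (-α*x) * Real.exp (-β*y)))).toReal :=
        setIntegral_congr_fun measurableSet_Ioi hinner
    _ = (∫⁻ x in Ioi 0, ENNReal.ofReal ((∫⁻ y in Ioi 0, ENNReal.ofReal
          (|x - y| * phiB (x*y) * (Real.exp (-α*x) * Real.exp (-β*y)))).toReal)).toReal :=
        integral_eq_lintegral_of_nonneg_ae
          (Filter.Eventually.of_forall fun x => ENNReal.toReal_nonneg)
          (hGm.ennreal_toReal.aestronglyMeasurable)
    _ ≤ (ENNReal.ofReal (6/(δ*s))).toReal := by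
        apply ENNReal.toReal_mono ENNReal.ofReal_ne_top
        exact le_trans (lintegral_mono fun x => ENNReal.ofReal_toReal_le) step2
    _ = 6/(δ*s) := ENNReal.toReal_ofReal (le_of_lt (div_pos (by norm_num) (mul_pos hδ0 hs0)))


lemma final_numeric {ω l m : ℝ} (hω : 0 < ω) (hl : 0 < l) (hl1 : l < 1) (hm : 0 < m) (hm1 : m < 1) :
    l * m * (6 / ((1 - 1/((1+ω*l)*(1+ω*m))) * Real.sqrt (1 - 1/((1+ω*l)*(1+ω*m)))))
      ≤ (3/2) * (1+ω)^3 / (ω * Real.sqrt ω) * Real.sqrt (l+m) := by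
  have hlm : 0 < l + m := by linarith
  have hwl : 0 < ω*l := mul_pos hω hl
  have hwm : 0 < ω*m := mul_pos hω hm
  have hαβ : 1 < (1+ω*l)*(1+ω*m) := by nlinarith
  have h1' : ω*l ≤ ω := by nlinarith
  have h2' : ω*m ≤ ω := by nlinarith
  have h3' : (ω*l)*(ω*m) ≤ ω*ω := mul_le_mul h1' h2' hwm.le hω.le
  have hαβle : (1+ω*l)*(1+ω*m) ≤ (1+ω)^2 := by nlinarith
  have hA0 : (0:ℝ) < (1+ω*l)*(1+ω*m) := by nlinarith
  have hδ0 : 0 < 1 - 1/((1+ω*l)*(1+ω*m)) := by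
    rw [sub_pos, div_lt_one hA0]; exact hαβ
  have hd0 : 0 < ω*(l+m)/(1+ω)^2 := by positivity
  have hdδ : ω*(l+m)/(1+ω)^2 ≤ 1 - 1/((1+ω*l)*(1+ω*m)) := by
    have h1 : (1:ℝ) - 1/((1+ω*l)*(1+ω*m)) = ((1+ω*l)*(1+ω*m) - 1)/((1+ω*l)*(1+ω*m)) := by
      field_simp
    rw [h1]
    exact div_le_div₀ (by nlinarith) (by nlinarith [hwl, hwm, mul_pos hwl hwm]) hA0 hαβle
  -- monotonicity of x * sqrt x
  have hmono : (ω*(l+m)/(1+ω)^2) * Real.sqrt (ω*(l+m)/(1+ω)^2)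
      ≤ (1 - 1/((1+ω*l)*(1+ω*m))) * Real.sqrt (1 - 1/((1+ω*l)*(1+ω*m))) :=
    mul_le_mul hdδ (Real.sqrt_le_sqrt hdδ) (Real.sqrt_nonneg _) hδ0.le
  have hstep1 : l * m * (6 / ((1 - 1/((1+ω*l)*(1+ω*m))) * Real.sqrt (1 - 1/((1+ω*l)*(1+ω*m)))))
      ≤ l * m * (6 / ((ω*(l+m)/(1+ω)^2) * Real.sqrt (ω*(l+m)/(1+ω)^2))) := by
    apply mul_le_mul_of_nonneg_left ?_ (by positivity)
    apply div_le_div_of_nonneg_left (by norm_num) ?_ hmono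
    positivity
  refine hstep1.trans ?_
  -- explicit form of sqrt d
  have hsd : Real.sqrt (ω*(l+m)/(1+ω)^2)
      = Real.sqrt ω * Real.sqrt (l+m) / (1+ω) := by
    rw [show ω*(l+m)/(1+ω)^2 = (Real.sqrt ω * Real.sqrt (l+m) / (1+ω))^2 by
      rw [div_pow, mul_pow, Real.sq_sqrt hω.le, Real.sq_sqrt hlm.le]]
    exact Real.sqrt_sq (by positivity)
  rw [hsd]
  have hS0 : 0 < Real.sqrt (l+m) := Real.sqrt_pos.2 hlm
  have hS2 : Real.sqrt (l+m) ^ 2 = l + m := Real.sq_sqrt hlm.le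
  have hw0 : 0 < Real.sqrt ω := Real.sqrt_pos.2 hω
  have hw2 : Real.sqrt ω ^ 2 = ω := Real.sq_sqrt hω.le
  have hD0 : 0 < (ω*(l+m)/(1+ω)^2) * (Real.sqrt ω * Real.sqrt (l+m) / (1+ω)) := by positivity
  rw [← mul_div_assoc, div_le_iff₀ hD0]
  have hkey : 4 * (l*m) ≤ (l+m)^2 := by nlinarith [sq_nonneg (l-m)]
  have hgoal : (3/2) * (1+ω)^3 / (ω * Real.sqrt ω) * Real.sqrt (l+m)
      * ((ω*(l+m)/(1+ω)^2) * (Real.sqrt ω * Real.sqrt (l+m) / (1+ω)))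
      = (3/2) * (Real.sqrt (l+m))^2 * (l+m) := by
    have hS2' : Real.sqrt (l+m) * Real.sqrt (l+m) = l + m := Real.mul_self_sqrt hlm.le
    field_simp
  rw [hgoal, hS2]
  nlinarith [hkey]

end Aux

open Set in
theorem stmt_14 (ω : ℝ) (hω : 0 < ω) :
    Filter.Tendsto
      (fun p : ℝ × ℝ => p.1 * p.2 * ∫ x in Set.Ioi (0:ℝ), ∫ y in Set.Ioi (0:ℝ),
        |x - y| * besselI0 (2 * Real.sqrt (x * y)) * Real.exp (-x - y) *
          Real.exp (-ω * (p.1 * x + p.2 * y)))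
      (nhdsWithin ((0:ℝ), (0:ℝ)) (Set.Ioi 0 ×ˢ Set.Ioi 0)) (nhds 0) := by
  have hupper : Filter.Tendsto (fun p : ℝ×ℝ => (3/2)*(1+ω)^3/(ω*Real.sqrt ω) * Real.sqrt (p.1+p.2))
      (nhdsWithin ((0:ℝ), (0:ℝ)) (Set.Ioi 0 ×ˢ Set.Ioi 0)) (nhds 0) := by
    have hc : Continuous fun p : ℝ×ℝ => (3/2)*(1+ω)^3/(ω*Real.sqrt ω) * Real.sqrt (p.1+p.2) :=
      continuous_const.mul ((continuous_fst.add continuous_snd).sqrt)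
    have h0 := hc.tendsto ((0:ℝ),(0:ℝ))
    simp only [add_zero, Real.sqrt_zero, mul_zero] at h0
    exact h0.mono_left nhdsWithin_le_nhds
  have hsmall : ∀ᶠ p : ℝ×ℝ in nhdsWithin ((0:ℝ), (0:ℝ)) (Set.Ioi 0 ×ˢ Set.Ioi 0),
      p.1 < 1 ∧ p.2 < 1 := by
    have h1 : ∀ᶠ p : ℝ×ℝ in nhds ((0:ℝ),(0:ℝ)), p.1 < 1 :=
      (continuous_fst.tendsto _).eventually_lt_const one_pos
    have h2 : ∀ᶠ p : ℝ×ℝ in nhds ((0:ℝ),(0:ℝ)), p.2 < 1 :=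
      (continuous_snd.tendsto _).eventually_lt_const one_pos
    exact (h1.and h2).filter_mono nhdsWithin_le_nhds
  apply tendsto_of_tendsto_of_tendsto_of_le_of_le' (g := fun _ : ℝ×ℝ => (0:ℝ))
    (h := fun p : ℝ×ℝ => (3/2)*(1+ω)^3/(ω*Real.sqrt ω) * Real.sqrt (p.1+p.2))
    tendsto_const_nhds hupper
  · -- lower bound
    filter_upwards [eventually_mem_nhdsWithin] with p hp
    have hl : (0:ℝ) < p.1 := hp.1
    have hm : (0:ℝ) < p.2 := hp.2
    have hI : 0 ≤ ∫ x in Set.Ioi (0:ℝ), ∫ y in Set.Ioi (0:ℝ),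
        |x - y| * besselI0 (2 * Real.sqrt (x * y)) * Real.exp (-x - y) *
          Real.exp (-ω * (p.1 * x + p.2 * y)) := by
      refine setIntegral_nonneg measurableSet_Ioi (fun x hx => ?_)
      refine setIntegral_nonneg measurableSet_Ioi (fun y hy => ?_)
      have hx0 : (0:ℝ) < x := hx
      have hy0 : (0:ℝ) < y := hy
      have hb : 0 ≤ besselI0 (2 * Real.sqrt (x * y)) := by
        rw [besselI0_eq_s14 hx0.le hy0.le]
        exact phiB_nonneg (by positivity)
      positivity
    positivity
  · -- upper bound
    filter_upwards [eventually_mem_nhdsWithin, hsmall] with p hp hps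
    have hl : (0:ℝ) < p.1 := hp.1
    have hm : (0:ℝ) < p.2 := hp.2
    have hα1 : (1:ℝ) < 1 + ω*p.1 := by nlinarith [mul_pos hω hl]
    have hβ1 : (1:ℝ) < 1 + ω*p.2 := by nlinarith [mul_pos hω hm]
    have hcongr : (∫ x in Set.Ioi (0:ℝ), ∫ y in Set.Ioi (0:ℝ),
        |x - y| * besselI0 (2 * Real.sqrt (x * y)) * Real.exp (-x - y) *
          Real.exp (-ω * (p.1 * x + p.2 * y)))
        = ∫ x in Set.Ioi (0:ℝ), ∫ y in Set.Ioi (0:ℝ),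
          |x - y| * phiB (x*y) * (Real.exp (-(1+ω*p.1)*x) * Real.exp (-(1+ω*p.2)*y)) := by
      refine setIntegral_congr_fun measurableSet_Ioi (fun x hx => ?_)
      refine setIntegral_congr_fun measurableSet_Ioi (fun y hy => ?_)
      have hx0 : (0:ℝ) < x := hx
      have hy0 : (0:ℝ) < y := hy
      have hE : Real.exp (-x-y) * Real.exp (-ω*(p.1*x+p.2*y))
          = Real.exp (-(1+ω*p.1)*x) * Real.exp (-(1+ω*p.2)*y) := by
        rw [← Real.exp_add, ← Real.exp_add]; congr 1; ring
      calc |x-y| * besselI0 (2*Real.sqrt (x*y)) * Real.exp (-x-y) * Real.exp (-ω*(p.1*x+p.2*y))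
          = |x-y| * besselI0 (2*Real.sqrt (x*y))
            * (Real.exp (-x-y) * Real.exp (-ω*(p.1*x+p.2*y))) := by ring
        _ = |x-y| * phiB (x*y) * (Real.exp (-(1+ω*p.1)*x) * Real.exp (-(1+ω*p.2)*y)) := by
            rw [besselI0_eq_s14 hx0.le hy0.le, hE]
    have hkey := key (α := 1+ω*p.1) (β := 1+ω*p.2) hα1 hβ1 rfl rfl rfl rfl rfl rfl
    calc p.1 * p.2 * ∫ x in Set.Ioi (0:ℝ), ∫ y in Set.Ioi (0:ℝ),
          |x - y| * besselI0 (2 * Real.sqrt (x * y)) * Real.exp (-x - y) *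
            Real.exp (-ω * (p.1 * x + p.2 * y))
        = p.1 * p.2 * ∫ x in Set.Ioi (0:ℝ), ∫ y in Set.Ioi (0:ℝ),
          |x - y| * phiB (x*y) * (Real.exp (-(1+ω*p.1)*x) * Real.exp (-(1+ω*p.2)*y)) := by
          rw [hcongr]
      _ ≤ p.1 * p.2 * (6 / ((1 - 1/((1+ω*p.1)*(1+ω*p.2)))
            * Real.sqrt (1 - 1/((1+ω*p.1)*(1+ω*p.2))))) :=
          mul_le_mul_of_nonneg_left hkey (by positivity)
      _ ≤ (3/2)*(1+ω)^3/(ω*Real.sqrt ω) * Real.sqrt (p.1+p.2) :=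
          final_numeric hω hl hps.1 hm hps.2
end

section
/- Let G be continuous on [0,T]², δ, γ > 0, and α, β ∈ ℝ. Then the integral equation F(t,s) - δ ∫₀^t e^{α(t-τ)} F(τ,s) dτ - γ ∫₀^s e^{β(s-σ)} F(t,σ) dσ = G(t,s) has a unique continuous solution F on [0,T]², and if Y is continuous and satisfies the corresponding inequality Y(t,s) - δ ∫₀^t e^{α(t-τ)} Y(τ,s) dτ - γ ∫₀^s e^{β(s-σ)} Y(t,σ) dσ ≤ G(t,s) for all (t,s), then Y(t,s) ≤ F(t,s) for all (t,s) ∈ [0,T]². -/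
open MeasureTheory Real Set intervalIntegral

lemma slice1 {T : ℝ} {F : ℝ → ℝ → ℝ}
    (hF : ContinuousOn (fun p : ℝ × ℝ => F p.1 p.2) (Set.Icc 0 T ×ˢ Set.Icc 0 T))
    {s : ℝ} (hs : s ∈ Set.Icc 0 T) : ContinuousOn (fun τ => F τ s) (Set.Icc 0 T) :=
  hF.comp (Continuous.continuousOn (by fun_prop)) (fun x hx => Set.mk_mem_prod hx hs)

lemma slice2 {T : ℝ} {F : ℝ → ℝ → ℝ}
    (hF : ContinuousOn (fun p : ℝ × ℝ => F p.1 p.2) (Set.Icc 0 T ×ˢ Set.Icc 0 T))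
    {t : ℝ} (ht : t ∈ Set.Icc 0 T) : ContinuousOn (fun σ => F t σ) (Set.Icc 0 T) :=
  hF.comp (Continuous.continuousOn (by fun_prop)) (fun x hx => Set.mk_mem_prod ht hx)

lemma exp_integral_bound {L t s T : ℝ} (hL : 0 < L) (ht : 0 ≤ t) (hs : 0 ≤ s) :
    ∫ τ in (0:ℝ)..t, Real.exp (L * (τ + s)) ≤ Real.exp (L * (t + s)) / L := by
  have h1 : ∀ τ : ℝ, Real.exp (L * (τ + s)) = Real.exp (L * τ) * Real.exp (L * s) := by
    intro τ; rw [← Real.exp_add]; ring_nf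
  simp only [h1]
  rw [intervalIntegral.integral_mul_const]
  have h2 : ∫ τ in (0:ℝ)..t, Real.exp (L * τ) = (Real.exp (L * t) - 1) / L := by
    rw [intervalIntegral.integral_comp_mul_left (fun x => Real.exp x) hL.ne']
    simp [integral_exp, smul_eq_mul]
    ring
  rw [h2]
  rw [div_mul_eq_mul_div, div_le_div_iff₀ hL hL]
  have h4 : Real.exp (L * (t + s)) = Real.exp (L * t) * Real.exp (L * s) := by
    rw [← Real.exp_add]; ring_nf
  have h3 : 0 < Real.exp (L * s) := Real.exp_pos _
  nlinarith [Real.exp_pos (L * t), Real.exp_pos (L*(t+s))]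

lemma positivity_lemma (T : ℝ) (hT : 0 < T) (δ γ α β : ℝ) (hδ : 0 < δ) (hγ : 0 < γ)
    (h : ℝ → ℝ → ℝ)
    (hh : ContinuousOn (fun p : ℝ × ℝ => h p.1 p.2) (Set.Icc 0 T ×ˢ Set.Icc 0 T))
    (hineq : ∀ t ∈ Set.Icc 0 T, ∀ s ∈ Set.Icc 0 T,
      0 ≤ h t s - δ * (∫ τ in (0:ℝ)..t, Real.exp (α * (t - τ)) * h τ s)
          - γ * (∫ σ in (0:ℝ)..s, Real.exp (β * (s - σ)) * h t σ)) :
    ∀ t ∈ Set.Icc 0 T, ∀ s ∈ Set.Icc 0 T, 0 ≤ h t s := by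
  set C : ℝ := δ * Real.exp (|α| * T) + γ * Real.exp (|β| * T) with hCdef
  have hC : 0 < C := by positivity
  set L : ℝ := C + 1 with hLdef
  have hL : 0 < L := by positivity
  set S := Set.Icc (0:ℝ) T ×ˢ Set.Icc (0:ℝ) T with hSdef
  have hScomp : IsCompact S := isCompact_Icc.prod isCompact_Icc
  have hSne : S.Nonempty := ⟨(0, 0), Set.mk_mem_prod ⟨le_refl 0, hT.le⟩ ⟨le_refl 0, hT.le⟩⟩
  set w : ℝ × ℝ → ℝ := fun p => h p.1 p.2 * Real.exp (-(L * (p.1 + p.2))) with hwdef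
  have hw : ContinuousOn w S := hh.mul (Continuous.continuousOn (by fun_prop))
  obtain ⟨p₀, hp₀S, hmin⟩ := hScomp.exists_isMinOn hSne hw
  set m := w p₀ with hmdef
  -- key: pointwise lower bound
  have key : ∀ t ∈ Set.Icc 0 T, ∀ s ∈ Set.Icc 0 T, m * Real.exp (L * (t + s)) ≤ h t s := by
    intro t ht s hs
    have h1 : m ≤ w (t, s) := hmin (Set.mk_mem_prod ht hs)
    have h2 := mul_le_mul_of_nonneg_right h1 (Real.exp_pos (L * (t + s))).le
    simpa [hwdef, Real.exp_neg, mul_assoc,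
      inv_mul_cancel₀ (Real.exp_pos (L * (t + s))).ne'] using h2
  suffices hm : 0 ≤ m by
    intro t ht s hs
    have := key t ht s hs
    nlinarith [Real.exp_pos (L * (t + s)), mul_nonneg hm (Real.exp_pos (L * (t + s))).le]
  by_contra hm
  push_neg at hm
  obtain ⟨ht₀, hs₀⟩ := hp₀S
  set t₀ := p₀.1 with ht₀def
  set s₀ := p₀.2 with hs₀def
  have hmE : h t₀ s₀ = m * Real.exp (L * (t₀ + s₀)) := by
    rw [hmdef, hwdef]
    simp only [Real.exp_neg]
    field_simp
    rfl
  -- bound on the first integral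
  have hbound1 : ∀ (A t s : ℝ), t ∈ Set.Icc 0 T → s ∈ Set.Icc 0 T →
      (∀ x ∈ Set.Icc (0:ℝ) t, m * Real.exp (|A| * T) * Real.exp (L * (x + s))
          ≤ Real.exp (A * (t - x)) * h x s) := by
    intro A t s ht hs x hx
    have hxT : x ∈ Set.Icc (0:ℝ) T := ⟨hx.1, hx.2.trans ht.2⟩
    have h1 : m * Real.exp (L * (x + s)) ≤ h x s := key x hxT s hs
    have hA : Real.exp (A * (t - x)) ≤ Real.exp (|A| * T) := by
      apply Real.exp_le_exp.2
      have h2 : A * (t - x) ≤ |A * (t - x)| := le_abs_self _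
      have h3 : |A * (t - x)| = |A| * |t - x| := abs_mul _ _
      have h4 : |t - x| ≤ T := by
        rw [abs_le]; constructor <;> nlinarith [hx.1, hx.2, ht.1, ht.2]
      nlinarith [abs_nonneg A]
    have hneg : m * Real.exp (L * (x + s)) ≤ 0 :=
      mul_nonpos_of_nonpos_of_nonneg hm.le (Real.exp_pos _).le
    calc m * Real.exp (|A| * T) * Real.exp (L * (x + s))
        = Real.exp (|A| * T) * (m * Real.exp (L * (x + s))) := by ring
      _ ≤ Real.exp (A * (t - x)) * (m * Real.exp (L * (x + s))) :=
          mul_le_mul_of_nonpos_right hA hneg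
      _ ≤ Real.exp (A * (t - x)) * h x s :=
          mul_le_mul_of_nonneg_left h1 (Real.exp_pos _).le
  -- lower bounds for the two integrals
  set E := Real.exp (L * (t₀ + s₀)) with hEdef
  have hE : 0 < E := Real.exp_pos _
  have hI1 : m * Real.exp (|α| * T) * (E / L)
      ≤ ∫ τ in (0:ℝ)..t₀, Real.exp (α * (t₀ - τ)) * h τ s₀ := by
    have step1 : ∫ τ in (0:ℝ)..t₀, m * Real.exp (|α| * T) * Real.exp (L * (τ + s₀))
        ≤ ∫ τ in (0:ℝ)..t₀, Real.exp (α * (t₀ - τ)) * h τ s₀ := by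
      apply intervalIntegral.integral_mono_on ht₀.1
      · exact (Continuous.intervalIntegrable (by fun_prop) 0 t₀)
      · apply ContinuousOn.intervalIntegrable
        rw [Set.uIcc_of_le ht₀.1]
        exact (Continuous.continuousOn (by fun_prop)).mul
          ((slice1 hh hs₀).mono (Set.Icc_subset_Icc le_rfl ht₀.2))
      · exact hbound1 α t₀ s₀ ht₀ hs₀
    have step2 : m * Real.exp (|α| * T) * (E / L)
        ≤ ∫ τ in (0:ℝ)..t₀, m * Real.exp (|α| * T) * Real.exp (L * (τ + s₀)) := by
      rw [intervalIntegral.integral_const_mul]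
      have hb := exp_integral_bound hL ht₀.1 hs₀.1 (T := T)
      have hneg : m * Real.exp (|α| * T) ≤ 0 :=
        mul_nonpos_of_nonpos_of_nonneg hm.le (Real.exp_pos _).le
      exact mul_le_mul_of_nonpos_left hb hneg
    linarith
  have hbound2 : ∀ x ∈ Set.Icc (0:ℝ) s₀, m * Real.exp (|β| * T) * Real.exp (L * (t₀ + x))
      ≤ Real.exp (β * (s₀ - x)) * h t₀ x := by
    intro x hx
    have hxT : x ∈ Set.Icc (0:ℝ) T := ⟨hx.1, hx.2.trans hs₀.2⟩
    have h1 : m * Real.exp (L * (t₀ + x)) ≤ h t₀ x := key t₀ ht₀ x hxT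
    have hA : Real.exp (β * (s₀ - x)) ≤ Real.exp (|β| * T) := by
      apply Real.exp_le_exp.2
      have h2 : β * (s₀ - x) ≤ |β * (s₀ - x)| := le_abs_self _
      have h3 : |β * (s₀ - x)| = |β| * |s₀ - x| := abs_mul _ _
      have h4 : |s₀ - x| ≤ T := by
        rw [abs_le]; constructor <;> nlinarith [hx.1, hx.2, hs₀.1, hs₀.2]
      nlinarith [abs_nonneg β]
    have hneg : m * Real.exp (L * (t₀ + x)) ≤ 0 :=
      mul_nonpos_of_nonpos_of_nonneg hm.le (Real.exp_pos _).le
    calc m * Real.exp (|β| * T) * Real.exp (L * (t₀ + x))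
        = Real.exp (|β| * T) * (m * Real.exp (L * (t₀ + x))) := by ring
      _ ≤ Real.exp (β * (s₀ - x)) * (m * Real.exp (L * (t₀ + x))) :=
          mul_le_mul_of_nonpos_right hA hneg
      _ ≤ Real.exp (β * (s₀ - x)) * h t₀ x :=
          mul_le_mul_of_nonneg_left h1 (Real.exp_pos _).le
  have hI2 : m * Real.exp (|β| * T) * (E / L)
      ≤ ∫ σ in (0:ℝ)..s₀, Real.exp (β * (s₀ - σ)) * h t₀ σ := by
    have step1 : ∫ σ in (0:ℝ)..s₀, m * Real.exp (|β| * T) * Real.exp (L * (t₀ + σ))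
        ≤ ∫ σ in (0:ℝ)..s₀, Real.exp (β * (s₀ - σ)) * h t₀ σ := by
      apply intervalIntegral.integral_mono_on hs₀.1
      · exact (Continuous.intervalIntegrable (by fun_prop) 0 s₀)
      · apply ContinuousOn.intervalIntegrable
        rw [Set.uIcc_of_le hs₀.1]
        exact (Continuous.continuousOn (by fun_prop)).mul
          ((slice2 hh ht₀).mono (Set.Icc_subset_Icc le_rfl hs₀.2))
      · exact hbound2
    have step2 : m * Real.exp (|β| * T) * (E / L)
        ≤ ∫ σ in (0:ℝ)..s₀, m * Real.exp (|β| * T) * Real.exp (L * (t₀ + σ)) := by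
      rw [intervalIntegral.integral_const_mul]
      have hb := exp_integral_bound hL hs₀.1 ht₀.1 (T := T)
      have hb' : ∫ σ in (0:ℝ)..s₀, Real.exp (L * (t₀ + σ)) ≤ E / L := by
        have : (fun σ => Real.exp (L * (t₀ + σ))) = fun σ => Real.exp (L * (σ + t₀)) := by
          funext σ; ring_nf
        rw [this]
        have hE' : Real.exp (L * (s₀ + t₀)) = E := by rw [hEdef]; ring_nf
        rw [← hE']
        exact exp_integral_bound hL hs₀.1 ht₀.1 (T := T)
      have hneg : m * Real.exp (|β| * T) ≤ 0 :=
        mul_nonpos_of_nonpos_of_nonneg hm.le (Real.exp_pos _).le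
      exact mul_le_mul_of_nonpos_left hb' hneg
    linarith
  -- combine
  have hfin := hineq t₀ ht₀ s₀ hs₀
  rw [hmE] at hfin
  have h5 : δ * (m * Real.exp (|α| * T) * (E / L))
      ≤ δ * ∫ τ in (0:ℝ)..t₀, Real.exp (α * (t₀ - τ)) * h τ s₀ :=
    mul_le_mul_of_nonneg_left hI1 hδ.le
  have h6 : γ * (m * Real.exp (|β| * T) * (E / L))
      ≤ γ * ∫ σ in (0:ℝ)..s₀, Real.exp (β * (s₀ - σ)) * h t₀ σ :=
    mul_le_mul_of_nonneg_left hI2 hγ.le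
  have h7 : 0 ≤ m * E - δ * (m * Real.exp (|α| * T) * (E / L))
      - γ * (m * Real.exp (|β| * T) * (E / L)) := by linarith
  have h8 : m * E - δ * (m * Real.exp (|α| * T) * (E / L))
      - γ * (m * Real.exp (|β| * T) * (E / L)) = m * E * (L - C) / L := by
    rw [hCdef]; field_simp; ring
  have h9 : L - C = 1 := by rw [hLdef]; ring
  rw [h8, h9] at h7
  have : m * E < 0 := mul_neg_of_neg_of_pos hm hE
  have : m * E * 1 / L < 0 := by
    apply div_neg_of_neg_of_pos _ hL
    linarith
  linarith

noncomputable def extF (T : ℝ) (hT : 0 < T)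
    (f : C(Set.Icc (0:ℝ) T × Set.Icc (0:ℝ) T, ℝ)) : ℝ → ℝ → ℝ :=
  fun t s => f (Set.projIcc 0 T hT.le t, Set.projIcc 0 T hT.le s)

lemma extF_cont (T : ℝ) (hT : 0 < T) (f : C(Set.Icc (0:ℝ) T × Set.Icc (0:ℝ) T, ℝ)) :
    Continuous (fun p : ℝ × ℝ => extF T hT f p.1 p.2) :=
  f.continuous.comp
    ((continuous_projIcc.comp continuous_fst).prodMk (continuous_projIcc.comp continuous_snd))

lemma extF_eq (T : ℝ) (hT : 0 < T) (f : C(Set.Icc (0:ℝ) T × Set.Icc (0:ℝ) T, ℝ))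
    {t s : ℝ} (ht : t ∈ Set.Icc (0:ℝ) T) (hs : s ∈ Set.Icc (0:ℝ) T) :
    extF T hT f t s = f (⟨t, ht⟩, ⟨s, hs⟩) := by
  simp [extF, Set.projIcc_of_mem, ht, hs]

lemma PhiCont (T : ℝ) (hT : 0 < T) (G : ℝ → ℝ → ℝ)
    (hG : ContinuousOn (fun p : ℝ × ℝ => G p.1 p.2) (Set.Icc 0 T ×ˢ Set.Icc 0 T))
    (δ γ α β : ℝ) (f : C(Set.Icc (0:ℝ) T × Set.Icc (0:ℝ) T, ℝ)) :
    Continuous (fun p : Set.Icc (0:ℝ) T × Set.Icc (0:ℝ) T =>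
      G p.1 p.2 + δ * (∫ τ in (0:ℝ)..(p.1 : ℝ), Real.exp (α * ((p.1:ℝ) - τ)) * extF T hT f τ p.2)
        + γ * (∫ σ in (0:ℝ)..(p.2 : ℝ), Real.exp (β * ((p.2:ℝ) - σ)) * extF T hT f (p.1:ℝ) σ)) := by
  have hcoe : Continuous (fun p : Set.Icc (0:ℝ) T × Set.Icc (0:ℝ) T => ((p.1:ℝ), (p.2:ℝ))) :=
    (continuous_subtype_val.comp continuous_fst).prodMk
      (continuous_subtype_val.comp continuous_snd)
  have hGc : Continuous (fun p : Set.Icc (0:ℝ) T × Set.Icc (0:ℝ) T => G (p.1:ℝ) (p.2:ℝ)) :=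
    hG.comp_continuous hcoe (fun x => Set.mk_mem_prod x.1.2 x.2.2)
  have hR1 : Continuous (fun p : Set.Icc (0:ℝ) T × Set.Icc (0:ℝ) T =>
      ∫ τ in (0:ℝ)..(p.1:ℝ), Real.exp (α * ((p.1:ℝ) - τ)) * extF T hT f τ (p.2:ℝ)) := by
    apply intervalIntegral.continuous_parametric_intervalIntegral_of_continuous
      (f := fun (p : Set.Icc (0:ℝ) T × Set.Icc (0:ℝ) T) (τ : ℝ) => Real.exp (α * ((p.1:ℝ) - τ)) * extF T hT f τ (p.2:ℝ))
      (s := fun p : Set.Icc (0:ℝ) T × Set.Icc (0:ℝ) T => (p.1 : ℝ))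
    · apply Continuous.mul
      · fun_prop
      · exact (extF_cont T hT f).comp
          (continuous_snd.prodMk ((continuous_subtype_val.comp (continuous_snd.comp continuous_fst))))
    · exact continuous_subtype_val.comp continuous_fst
  have hR2 : Continuous (fun p : Set.Icc (0:ℝ) T × Set.Icc (0:ℝ) T =>
      ∫ σ in (0:ℝ)..(p.2:ℝ), Real.exp (β * ((p.2:ℝ) - σ)) * extF T hT f (p.1:ℝ) σ) := by
    apply intervalIntegral.continuous_parametric_intervalIntegral_of_continuous
      (f := fun (p : Set.Icc (0:ℝ) T × Set.Icc (0:ℝ) T) (σ : ℝ) => Real.exp (β * ((p.2:ℝ) - σ)) * extF T hT f (p.1:ℝ) σ)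
      (s := fun p : Set.Icc (0:ℝ) T × Set.Icc (0:ℝ) T => (p.2 : ℝ))
    · apply Continuous.mul
      · fun_prop
      · exact (extF_cont T hT f).comp
          ((continuous_subtype_val.comp (continuous_fst.comp continuous_fst)).prodMk continuous_snd)
    · exact continuous_subtype_val.comp continuous_snd
  exact (hGc.add (continuous_const.mul hR1)).add (continuous_const.mul hR2)

noncomputable def PhiMap (T : ℝ) (hT : 0 < T) (G : ℝ → ℝ → ℝ)
    (hG : ContinuousOn (fun p : ℝ × ℝ => G p.1 p.2) (Set.Icc 0 T ×ˢ Set.Icc 0 T))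
    (δ γ α β : ℝ) (f : C(Set.Icc (0:ℝ) T × Set.Icc (0:ℝ) T, ℝ)) :
    C(Set.Icc (0:ℝ) T × Set.Icc (0:ℝ) T, ℝ) :=
  ⟨_, PhiCont T hT G hG δ γ α β f⟩

lemma PhiMap_apply (T : ℝ) (hT : 0 < T) (G : ℝ → ℝ → ℝ)
    (hG : ContinuousOn (fun p : ℝ × ℝ => G p.1 p.2) (Set.Icc 0 T ×ˢ Set.Icc 0 T))
    (δ γ α β : ℝ) (f : C(Set.Icc (0:ℝ) T × Set.Icc (0:ℝ) T, ℝ))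
    (p : Set.Icc (0:ℝ) T × Set.Icc (0:ℝ) T) :
    PhiMap T hT G hG δ γ α β f p =
      G p.1 p.2 + δ * (∫ τ in (0:ℝ)..(p.1 : ℝ), Real.exp (α * ((p.1:ℝ) - τ)) * extF T hT f τ p.2)
        + γ * (∫ σ in (0:ℝ)..(p.2 : ℝ), Real.exp (β * ((p.2:ℝ) - σ)) * extF T hT f (p.1:ℝ) σ) :=
  rfl

-- generic integral bound used in the contraction estimate
lemma int_bound (n : ℕ) (A t s c e : ℝ) (ht : 0 ≤ t) (hs : 0 ≤ s) (hc : 0 ≤ c) (he0 : 0 ≤ e)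
    (w : ℝ → ℝ) (hw : Continuous w) (hbd : ∀ x ∈ Set.Icc (0:ℝ) t, |w x| ≤ c * (x + s) ^ n)
    (he : ∀ x ∈ Set.Icc (0:ℝ) t, Real.exp (A * (t - x)) ≤ e) :
    |∫ x in (0:ℝ)..t, Real.exp (A * (t - x)) * w x| ≤ e * c * (t + s) ^ (n + 1) / (n + 1) := by
  have habs : |∫ x in (0:ℝ)..t, Real.exp (A * (t - x)) * w x|
      ≤ ∫ x in (0:ℝ)..t, |Real.exp (A * (t - x)) * w x| :=
    intervalIntegral.abs_integral_le_integral_abs ht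
  have hmono : ∫ x in (0:ℝ)..t, |Real.exp (A * (t - x)) * w x|
      ≤ ∫ x in (0:ℝ)..t, e * (c * (x + s) ^ n) := by
    apply intervalIntegral.integral_mono_on ht
    · exact Continuous.intervalIntegrable (by fun_prop) 0 t
    · exact Continuous.intervalIntegrable (by fun_prop) 0 t
    · intro x hx
      rw [abs_mul, abs_of_pos (Real.exp_pos _)]
      exact mul_le_mul (he x hx) (hbd x hx) (abs_nonneg _)  he0
  have hcalc : ∫ x in (0:ℝ)..t, e * (c * (x + s) ^ n)
      = e * c * (((t + s) ^ (n + 1) - s ^ (n + 1)) / (n + 1)) := by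
    rw [intervalIntegral.integral_const_mul, intervalIntegral.integral_const_mul]
    rw [intervalIntegral.integral_comp_add_right (fun y => y ^ n) s, zero_add,
      integral_pow]
    ring
  have hfin : e * c * (((t + s) ^ (n + 1) - s ^ (n + 1)) / (n + 1))
      ≤ e * c * (t + s) ^ (n + 1) / (n + 1) := by
    rw [mul_div_assoc]
    apply mul_le_mul_of_nonneg_left _ (mul_nonneg he0 hc)
    apply div_le_div_of_nonneg_right _ (by positivity)
    nlinarith [pow_nonneg hs (n + 1)]
  calc |∫ x in (0:ℝ)..t, Real.exp (A * (t - x)) * w x|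
      ≤ ∫ x in (0:ℝ)..t, e * (c * (x + s) ^ n) := le_trans habs hmono
    _ = e * c * (((t + s) ^ (n + 1) - s ^ (n + 1)) / (n + 1)) := hcalc
    _ ≤ e * c * (t + s) ^ (n + 1) / (n + 1) := hfin

lemma exp_le_exp_absT {A t x T : ℝ} (htT : t ≤ T) (hx0 : 0 ≤ x) (hxt : x ≤ t) :
    Real.exp (A * (t - x)) ≤ Real.exp (|A| * T) := by
  apply Real.exp_le_exp.2
  have h2 : A * (t - x) ≤ |A * (t - x)| := le_abs_self _
  have h3 : |A * (t - x)| = |A| * |t - x| := abs_mul _ _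
  have h4 : |t - x| ≤ T := by rw [abs_le]; constructor <;> nlinarith
  nlinarith [abs_nonneg A]

lemma extF_slice1 (T : ℝ) (hT : 0 < T) (f : C(Set.Icc (0:ℝ) T × Set.Icc (0:ℝ) T, ℝ)) (s : ℝ) :
    Continuous (fun τ => extF T hT f τ s) :=
  (extF_cont T hT f).comp (continuous_id.prodMk continuous_const)

lemma extF_slice2 (T : ℝ) (hT : 0 < T) (f : C(Set.Icc (0:ℝ) T × Set.Icc (0:ℝ) T, ℝ)) (t : ℝ) :
    Continuous (fun σ => extF T hT f t σ) :=
  (extF_cont T hT f).comp (continuous_const.prodMk continuous_id)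

lemma exists_sol (T : ℝ) (hT : 0 < T) (G : ℝ → ℝ → ℝ)
    (hG : ContinuousOn (fun p : ℝ × ℝ => G p.1 p.2) (Set.Icc 0 T ×ˢ Set.Icc 0 T))
    (δ γ α β : ℝ) (hδ : 0 < δ) (hγ : 0 < γ) :
    ∃ F : ℝ → ℝ → ℝ,
      ContinuousOn (fun p : ℝ × ℝ => F p.1 p.2) (Set.Icc 0 T ×ˢ Set.Icc 0 T) ∧
      ∀ t ∈ Set.Icc 0 T, ∀ s ∈ Set.Icc 0 T,
        F t s = G t s + δ * (∫ τ in (0:ℝ)..t, Real.exp (α * (t - τ)) * F τ s)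
            + γ * (∫ σ in (0:ℝ)..s, Real.exp (β * (s - σ)) * F t σ) := by
  haveI : Nonempty C(Set.Icc (0:ℝ) T × Set.Icc (0:ℝ) T, ℝ) := ⟨ContinuousMap.const _ 0⟩
  set Φ := PhiMap T hT G hG δ γ α β with hΦ
  set M := δ * Real.exp (|α| * T) + γ * Real.exp (|β| * T) with hMdef
  have hM0 : 0 < M := by positivity
  -- one-step estimate
  have hstep : ∀ (n : ℕ) (c : ℝ), 0 ≤ c →
      ∀ u v : C(Set.Icc (0:ℝ) T × Set.Icc (0:ℝ) T, ℝ),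
      (∀ q : Set.Icc (0:ℝ) T × Set.Icc (0:ℝ) T,
        |u q - v q| ≤ c * ((q.1:ℝ) + (q.2:ℝ)) ^ n) →
      ∀ p : Set.Icc (0:ℝ) T × Set.Icc (0:ℝ) T,
        |Φ u p - Φ v p| ≤ M * c * ((p.1:ℝ) + (p.2:ℝ)) ^ (n + 1) / (n + 1) := by
    intro n c hc u v hIH p
    set t := (p.1 : ℝ) with htdef
    set s := (p.2 : ℝ) with hsdef
    have ht : t ∈ Set.Icc (0:ℝ) T := p.1.2
    have hs : s ∈ Set.Icc (0:ℝ) T := p.2.2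
    have hextbd : ∀ x y : ℝ, x ∈ Set.Icc (0:ℝ) T → y ∈ Set.Icc (0:ℝ) T →
        |extF T hT u x y - extF T hT v x y| ≤ c * (x + y) ^ n := by
      intro x y hx hy
      rw [extF_eq T hT u hx hy, extF_eq T hT v hx hy]
      exact hIH (⟨x, hx⟩, ⟨y, hy⟩)
    have int1u : IntervalIntegrable (fun τ => Real.exp (α * (t - τ)) * extF T hT u τ s)
        MeasureTheory.volume 0 t :=
      Continuous.intervalIntegrable ((by fun_prop : Continuous fun τ =>
        Real.exp (α * (t - τ))).mul (extF_slice1 T hT u s)) 0 t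
    have int1v : IntervalIntegrable (fun τ => Real.exp (α * (t - τ)) * extF T hT v τ s)
        MeasureTheory.volume 0 t :=
      Continuous.intervalIntegrable ((by fun_prop : Continuous fun τ =>
        Real.exp (α * (t - τ))).mul (extF_slice1 T hT v s)) 0 t
    have int2u : IntervalIntegrable (fun σ => Real.exp (β * (s - σ)) * extF T hT u t σ)
        MeasureTheory.volume 0 s :=
      Continuous.intervalIntegrable ((by fun_prop : Continuous fun σ =>
        Real.exp (β * (s - σ))).mul (extF_slice2 T hT u t)) 0 s
    have int2v : IntervalIntegrable (fun σ => Real.exp (β * (s - σ)) * extF T hT v t σ)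
        MeasureTheory.volume 0 s :=
      Continuous.intervalIntegrable ((by fun_prop : Continuous fun σ =>
        Real.exp (β * (s - σ))).mul (extF_slice2 T hT v t)) 0 s
    have hdiff : Φ u p - Φ v p =
        δ * (∫ τ in (0:ℝ)..t, Real.exp (α * (t - τ)) *
              (extF T hT u τ s - extF T hT v τ s))
        + γ * (∫ σ in (0:ℝ)..s, Real.exp (β * (s - σ)) *
              (extF T hT u t σ - extF T hT v t σ)) := by
      have e1 : ∫ τ in (0:ℝ)..t, Real.exp (α * (t - τ)) *
            (extF T hT u τ s - extF T hT v τ s)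
          = (∫ τ in (0:ℝ)..t, Real.exp (α * (t - τ)) * extF T hT u τ s)
            - ∫ τ in (0:ℝ)..t, Real.exp (α * (t - τ)) * extF T hT v τ s := by
        rw [← intervalIntegral.integral_sub int1u int1v]
        congr 1; funext τ; ring
      have e2 : ∫ σ in (0:ℝ)..s, Real.exp (β * (s - σ)) *
            (extF T hT u t σ - extF T hT v t σ)
          = (∫ σ in (0:ℝ)..s, Real.exp (β * (s - σ)) * extF T hT u t σ)
            - ∫ σ in (0:ℝ)..s, Real.exp (β * (s - σ)) * extF T hT v t σ := by
        rw [← intervalIntegral.integral_sub int2u int2v]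
        congr 1; funext σ; ring
      rw [hΦ, PhiMap_apply, PhiMap_apply, e1, e2]
      ring
    have hb1 : |∫ τ in (0:ℝ)..t, Real.exp (α * (t - τ)) *
          (extF T hT u τ s - extF T hT v τ s)|
        ≤ Real.exp (|α| * T) * c * (t + s) ^ (n + 1) / (n + 1) := by
      apply int_bound n α t s c _ ht.1 hs.1 hc (Real.exp_pos _).le
      · exact (extF_slice1 T hT u s).sub (extF_slice1 T hT v s)
      · intro x hx
        exact hextbd x s ⟨hx.1, hx.2.trans ht.2⟩ hs
      · intro x hx
        exact exp_le_exp_absT ht.2 hx.1 hx.2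
    have hb2 : |∫ σ in (0:ℝ)..s, Real.exp (β * (s - σ)) *
          (extF T hT u t σ - extF T hT v t σ)|
        ≤ Real.exp (|β| * T) * c * (t + s) ^ (n + 1) / (n + 1) := by
      have := int_bound n β s t c (Real.exp (|β| * T)) hs.1 ht.1 hc (Real.exp_pos _).le
        (fun σ => extF T hT u t σ - extF T hT v t σ)
        ((extF_slice2 T hT u t).sub (extF_slice2 T hT v t))
        (fun x hx => by rw [add_comm x t]; exact hextbd t x ht ⟨hx.1, hx.2.trans hs.2⟩)
        (fun x hx => exp_le_exp_absT hs.2 hx.1 hx.2)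
      rw [add_comm s t] at this
      exact this
    rw [hdiff]
    have habs : |δ * (∫ τ in (0:ℝ)..t, Real.exp (α * (t - τ)) *
            (extF T hT u τ s - extF T hT v τ s))
          + γ * (∫ σ in (0:ℝ)..s, Real.exp (β * (s - σ)) *
            (extF T hT u t σ - extF T hT v t σ))|
        ≤ δ * |∫ τ in (0:ℝ)..t, Real.exp (α * (t - τ)) *
            (extF T hT u τ s - extF T hT v τ s)|
          + γ * |∫ σ in (0:ℝ)..s, Real.exp (β * (s - σ)) *
            (extF T hT u t σ - extF T hT v t σ)| := by
      refine (abs_add_le _ _).trans ?_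
      rw [abs_mul, abs_mul, abs_of_pos hδ, abs_of_pos hγ]
    have h5 : δ * |∫ τ in (0:ℝ)..t, Real.exp (α * (t - τ)) *
            (extF T hT u τ s - extF T hT v τ s)|
          + γ * |∫ σ in (0:ℝ)..s, Real.exp (β * (s - σ)) *
            (extF T hT u t σ - extF T hT v t σ)|
        ≤ δ * (Real.exp (|α| * T) * c * (t + s) ^ (n + 1) / (n + 1))
          + γ * (Real.exp (|β| * T) * c * (t + s) ^ (n + 1) / (n + 1)) :=
      add_le_add (mul_le_mul_of_nonneg_left hb1 hδ.le) (mul_le_mul_of_nonneg_left hb2 hγ.le)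
    have h6 : δ * (Real.exp (|α| * T) * c * (t + s) ^ (n + 1) / (n + 1))
          + γ * (Real.exp (|β| * T) * c * (t + s) ^ (n + 1) / (n + 1))
        = M * c * (t + s) ^ (n + 1) / (n + 1) := by rw [hMdef]; ring
    linarith
  -- iterated estimate
  have hiter : ∀ (n : ℕ) (f g : C(Set.Icc (0:ℝ) T × Set.Icc (0:ℝ) T, ℝ))
      (p : Set.Icc (0:ℝ) T × Set.Icc (0:ℝ) T),
      |(Φ^[n] f) p - (Φ^[n] g) p|
        ≤ M ^ n * ((p.1:ℝ) + (p.2:ℝ)) ^ n / n.factorial * dist f g := by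
    intro n
    induction n with
    | zero =>
      intro f g p
      simpa [Real.dist_eq] using ContinuousMap.dist_apply_le_dist (f := f) (g := g) p
    | succ n ih =>
      intro f g p
      rw [Function.iterate_succ_apply', Function.iterate_succ_apply']
      have hc : (0:ℝ) ≤ M ^ n / n.factorial * dist f g := by positivity
      have hIH : ∀ q : Set.Icc (0:ℝ) T × Set.Icc (0:ℝ) T,
          |(Φ^[n] f) q - (Φ^[n] g) q|
            ≤ (M ^ n / n.factorial * dist f g) * ((q.1:ℝ) + (q.2:ℝ)) ^ n := by
        intro q
        have := ih f g q
        calc |(Φ^[n] f) q - (Φ^[n] g) q|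
            ≤ M ^ n * ((q.1:ℝ) + (q.2:ℝ)) ^ n / n.factorial * dist f g := this
          _ = (M ^ n / n.factorial * dist f g) * ((q.1:ℝ) + (q.2:ℝ)) ^ n := by ring
      have := hstep n (M ^ n / n.factorial * dist f g) hc (Φ^[n] f) (Φ^[n] g) hIH p
      calc |Φ (Φ^[n] f) p - Φ (Φ^[n] g) p|
          ≤ M * (M ^ n / n.factorial * dist f g) * ((p.1:ℝ) + (p.2:ℝ)) ^ (n + 1) / (n + 1) :=
            this
        _ = M ^ (n + 1) * ((p.1:ℝ) + (p.2:ℝ)) ^ (n + 1) / (n + 1).factorial * dist f g := by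
            rw [Nat.factorial_succ]
            push_cast
            field_simp
            ring
  -- distance estimate
  have hdist : ∀ (n : ℕ) (f g : C(Set.Icc (0:ℝ) T × Set.Icc (0:ℝ) T, ℝ)),
      dist (Φ^[n] f) (Φ^[n] g) ≤ (M * (2 * T)) ^ n / n.factorial * dist f g := by
    intro n f g
    have h0 : (0:ℝ) ≤ (M * (2 * T)) ^ n / n.factorial * dist f g := by
      have := dist_nonneg (x := f) (y := g); positivity
    rw [ContinuousMap.dist_le h0]
    intro p
    rw [Real.dist_eq]
    have h1 := hiter n f g p
    have h2 : ((p.1:ℝ) + (p.2:ℝ)) ^ n ≤ (2 * T) ^ n := by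
      apply pow_le_pow_left₀ (add_nonneg p.1.2.1 p.2.2.1)
      linarith [p.1.2.2, p.2.2.2]
    calc |(Φ^[n] f) p - (Φ^[n] g) p|
        ≤ M ^ n * ((p.1:ℝ) + (p.2:ℝ)) ^ n / n.factorial * dist f g := h1
      _ ≤ M ^ n * (2 * T) ^ n / n.factorial * dist f g := by
          gcongr
      _ = (M * (2 * T)) ^ n / n.factorial * dist f g := by rw [mul_pow M (2 * T) n]
  obtain ⟨n, hn⟩ : ∃ n : ℕ, (M * (2 * T)) ^ n / n.factorial < 1 :=
    ((FloorSemiring.tendsto_pow_div_factorial_atTop (M * (2 * T))).eventually_lt_const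
      one_pos).exists
  have hKnn : (0:ℝ) ≤ (M * (2 * T)) ^ n / n.factorial := by positivity
  have hcontr : ContractingWith (Real.toNNReal ((M * (2 * T)) ^ n / n.factorial)) (Φ^[n]) := by
    constructor
    · exact_mod_cast Real.toNNReal_lt_one.2 hn
    · apply LipschitzWith.of_dist_le_mul
      intro f g
      rw [Real.coe_toNNReal _ hKnn]
      exact hdist n f g
  set x := ContractingWith.fixedPoint (Φ^[n]) hcontr with hxdef
  have hfix : Φ^[n] x = x := hcontr.fixedPoint_isFixedPt
  have hfixΦ : Φ x = x := by
    have h1 : Function.IsFixedPt (Φ^[n]) (Φ x) := by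
      show Φ^[n] (Φ x) = Φ x
      rw [← Function.iterate_succ_apply, Function.iterate_succ_apply', hfix]
    have h2 := hcontr.fixedPoint_unique h1
    rw [h2, ← hxdef]
  refine ⟨extF T hT x, (extF_cont T hT x).continuousOn, ?_⟩
  intro t ht s hs
  have h3 : extF T hT x t s = x (⟨t, ht⟩, ⟨s, hs⟩) := extF_eq T hT x ht hs
  have h4 : x (⟨t, ht⟩, ⟨s, hs⟩) = Φ x (⟨t, ht⟩, ⟨s, hs⟩) := by rw [hfixΦ]
  rw [h3, h4, hΦ, PhiMap_apply]

theorem stmt_19 (T : ℝ) (hT : 0 < T) (G : ℝ → ℝ → ℝ)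
    (hG : ContinuousOn (fun p : ℝ × ℝ => G p.1 p.2) (Set.Icc 0 T ×ˢ Set.Icc 0 T))
    (δ γ α β : ℝ) (hδ : 0 < δ) (hγ : 0 < γ) :
    ∃ F : ℝ → ℝ → ℝ,
      (ContinuousOn (fun p : ℝ × ℝ => F p.1 p.2) (Set.Icc 0 T ×ˢ Set.Icc 0 T) ∧
        ∀ t ∈ Set.Icc 0 T, ∀ s ∈ Set.Icc 0 T,
          F t s - δ * (∫ τ in (0:ℝ)..t, Real.exp (α * (t - τ)) * F τ s)
              - γ * (∫ σ in (0:ℝ)..s, Real.exp (β * (s - σ)) * F t σ) = G t s) ∧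
      (∀ F' : ℝ → ℝ → ℝ,
        ContinuousOn (fun p : ℝ × ℝ => F' p.1 p.2) (Set.Icc 0 T ×ˢ Set.Icc 0 T) →
        (∀ t ∈ Set.Icc 0 T, ∀ s ∈ Set.Icc 0 T,
          F' t s - δ * (∫ τ in (0:ℝ)..t, Real.exp (α * (t - τ)) * F' τ s)
              - γ * (∫ σ in (0:ℝ)..s, Real.exp (β * (s - σ)) * F' t σ) = G t s) →
        ∀ t ∈ Set.Icc 0 T, ∀ s ∈ Set.Icc 0 T, F' t s = F t s) ∧
      ∀ Y : ℝ → ℝ → ℝ,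
        ContinuousOn (fun p : ℝ × ℝ => Y p.1 p.2) (Set.Icc 0 T ×ˢ Set.Icc 0 T) →
        (∀ t ∈ Set.Icc 0 T, ∀ s ∈ Set.Icc 0 T,
          Y t s - δ * (∫ τ in (0:ℝ)..t, Real.exp (α * (t - τ)) * Y τ s)
              - γ * (∫ σ in (0:ℝ)..s, Real.exp (β * (s - σ)) * Y t σ) ≤ G t s) →
        ∀ t ∈ Set.Icc 0 T, ∀ s ∈ Set.Icc 0 T, Y t s ≤ F t s := by
  obtain ⟨F, hFcont, hFeq⟩ := exists_sol T hT G hG δ γ α β hδ hγ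
  have hFeq' : ∀ t ∈ Set.Icc 0 T, ∀ s ∈ Set.Icc 0 T,
      F t s - δ * (∫ τ in (0:ℝ)..t, Real.exp (α * (t - τ)) * F τ s)
        - γ * (∫ σ in (0:ℝ)..s, Real.exp (β * (s - σ)) * F t σ) = G t s := by
    intro t ht s hs
    have := hFeq t ht s hs
    linarith
  -- general comparison principle
  have comp : ∀ F₁ Y : ℝ → ℝ → ℝ,
      ContinuousOn (fun p : ℝ × ℝ => F₁ p.1 p.2) (Set.Icc 0 T ×ˢ Set.Icc 0 T) →
      ContinuousOn (fun p : ℝ × ℝ => Y p.1 p.2) (Set.Icc 0 T ×ˢ Set.Icc 0 T) →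
      (∀ t ∈ Set.Icc 0 T, ∀ s ∈ Set.Icc 0 T,
        F₁ t s - δ * (∫ τ in (0:ℝ)..t, Real.exp (α * (t - τ)) * F₁ τ s)
            - γ * (∫ σ in (0:ℝ)..s, Real.exp (β * (s - σ)) * F₁ t σ) = G t s) →
      (∀ t ∈ Set.Icc 0 T, ∀ s ∈ Set.Icc 0 T,
        Y t s - δ * (∫ τ in (0:ℝ)..t, Real.exp (α * (t - τ)) * Y τ s)
            - γ * (∫ σ in (0:ℝ)..s, Real.exp (β * (s - σ)) * Y t σ) ≤ G t s) →
      ∀ t ∈ Set.Icc 0 T, ∀ s ∈ Set.Icc 0 T, Y t s ≤ F₁ t s := by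
    intro F₁ Y hF₁ hY hEq hIneq
    have hpos := positivity_lemma T hT δ γ α β hδ hγ (fun t s => F₁ t s - Y t s)
      (by exact hF₁.sub hY) ?_
    · intro t ht s hs
      have := hpos t ht s hs
      simpa using this
    · intro t ht s hs
      have intF1 : IntervalIntegrable (fun τ => Real.exp (α * (t - τ)) * F₁ τ s)
          MeasureTheory.volume 0 t := by
        apply ContinuousOn.intervalIntegrable
        rw [Set.uIcc_of_le ht.1]
        exact (Continuous.continuousOn (by fun_prop)).mul
          ((slice1 hF₁ hs).mono (Set.Icc_subset_Icc le_rfl ht.2))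
      have intY1 : IntervalIntegrable (fun τ => Real.exp (α * (t - τ)) * Y τ s)
          MeasureTheory.volume 0 t := by
        apply ContinuousOn.intervalIntegrable
        rw [Set.uIcc_of_le ht.1]
        exact (Continuous.continuousOn (by fun_prop)).mul
          ((slice1 hY hs).mono (Set.Icc_subset_Icc le_rfl ht.2))
      have intF2 : IntervalIntegrable (fun σ => Real.exp (β * (s - σ)) * F₁ t σ)
          MeasureTheory.volume 0 s := by
        apply ContinuousOn.intervalIntegrable
        rw [Set.uIcc_of_le hs.1]
        exact (Continuous.continuousOn (by fun_prop)).mul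
          ((slice2 hF₁ ht).mono (Set.Icc_subset_Icc le_rfl hs.2))
      have intY2 : IntervalIntegrable (fun σ => Real.exp (β * (s - σ)) * Y t σ)
          MeasureTheory.volume 0 s := by
        apply ContinuousOn.intervalIntegrable
        rw [Set.uIcc_of_le hs.1]
        exact (Continuous.continuousOn (by fun_prop)).mul
          ((slice2 hY ht).mono (Set.Icc_subset_Icc le_rfl hs.2))
      have e1 : ∫ τ in (0:ℝ)..t, Real.exp (α * (t - τ)) * (F₁ τ s - Y τ s)
          = (∫ τ in (0:ℝ)..t, Real.exp (α * (t - τ)) * F₁ τ s)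
            - ∫ τ in (0:ℝ)..t, Real.exp (α * (t - τ)) * Y τ s := by
        rw [← intervalIntegral.integral_sub intF1 intY1]
        congr 1; funext τ; ring
      have e2 : ∫ σ in (0:ℝ)..s, Real.exp (β * (s - σ)) * (F₁ t σ - Y t σ)
          = (∫ σ in (0:ℝ)..s, Real.exp (β * (s - σ)) * F₁ t σ)
            - ∫ σ in (0:ℝ)..s, Real.exp (β * (s - σ)) * Y t σ := by
        rw [← intervalIntegral.integral_sub intF2 intY2]
        congr 1; funext σ; ring
      have hq := hEq t ht s hs
      have hi := hIneq t ht s hs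
      show (0:ℝ) ≤ (F₁ t s - Y t s)
          - δ * (∫ τ in (0:ℝ)..t, Real.exp (α * (t - τ)) * (F₁ τ s - Y τ s))
          - γ * (∫ σ in (0:ℝ)..s, Real.exp (β * (s - σ)) * (F₁ t σ - Y t σ))
      rw [e1, e2]
      linarith
  refine ⟨F, ⟨hFcont, hFeq'⟩, ?_, ?_⟩
  · intro F' hF'c hF'eq t ht s hs
    exact le_antisymm
      (comp F F' hFcont hF'c hFeq' (fun t ht s hs => le_of_eq (hF'eq t ht s hs)) t ht s hs)
      (comp F' F hF'c hFcont hF'eq (fun t ht s hs => le_of_eq (hFeq' t ht s hs)) t ht s hs)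
  · intro Y hYc hYineq t ht s hs
    exact comp F Y hFcont hYc hFeq' hYineq t ht s hs
end
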